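/- arXiv:1308.0579 — 11 statements merged into one kernel-verified Lean document; each statement's English description precedes it below -/
import Mathlib

section
/- Let R be an associative unital algebra over a field k, let a, b ∈ k, set α = a + b and β = −ab, and let d, u ∈ R. With Ω₁ = du − a·ud, the pair of down-up relations d²u = α·dud + β·ud² and du² = α·udu + β·u²d holds if and only if the pair of relations d·Ω₁ = b·Ω₁·d and Ω₁·u = b·u·Ω₁ holds. -/
/-- Lemma 7.1 (last assertion): for a down-up algebra situation, the pair of
down-up relations is equivalent to the pair of relations expressing that
`Ω₁ = du - a•ud` is normal with `d·Ω₁ = b·Ω₁·d` and `Ω₁·u = b·u·Ω₁`. -/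
theorem downUp_relations_iff_omega_relations
    {k : Type*} [Field k] {R : Type*} [Ring R] [Algebra k R]
    (a b : k) (d u : R) :
    (d ^ 2 * u = (a + b) • (d * u * d) + (-(a * b)) • (u * d ^ 2) ∧
      d * u ^ 2 = (a + b) • (u * d * u) + (-(a * b)) • (u ^ 2 * d)) ↔
    (d * (d * u - a • (u * d)) = b • ((d * u - a • (u * d)) * d) ∧
      (d * u - a • (u * d)) * u = b • (u * (d * u - a • (u * d)))) := by
  simp only [pow_two, mul_sub, sub_mul, smul_sub, smul_smul, add_smul, neg_smul,
    mul_smul_comm, smul_mul_assoc, mul_assoc]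
  constructor <;> rintro ⟨h1, h2⟩ <;> constructor <;>
    [linear_combination (norm := module) h1;
     linear_combination (norm := module) h2;
     linear_combination (norm := module) h1;
     linear_combination (norm := module) h2]
end

section
/- Let R be an associative unital algebra over a field k, let a, b ∈ k be nonzero, set α = a + b and β = −ab, and suppose d, u ∈ R satisfy the down-up relations d²u = α·dud + β·ud² and du² = α·udu + β·u²d. With Ω₁ = du − a·ud and Ω₂ = du − b·ud, the following identities hold in R: d·Ω₁ = b·Ω₁·d, Ω₁·u = b·u·Ω₁, d·Ω₂ = a·Ω₂·d, Ω₂·u = a·u·Ω₂, (ud)·Ωᵢ = Ωᵢ·(ud) and (du)·Ωᵢ = Ωᵢ·(du) for i = 1, 2, and Ω₁·Ω₂ = Ω₂·Ω₁. -/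
/-- Lemma 7.1: if `d, u` satisfy the down-up relations with parameters
`α = a + b`, `β = -ab` (`a, b ≠ 0`), then `Ω₁ = du - a•ud` and `Ω₂ = du - b•ud`
are normal-type elements satisfying the listed commutation identities. -/
theorem downUp_omega_identities
    {k : Type*} [Field k] {R : Type*} [Ring R] [Algebra k R]
    (a b : k) (ha : a ≠ 0) (hb : b ≠ 0) (d u Ω₁ Ω₂ : R)
    (hΩ₁ : Ω₁ = d * u - a • (u * d)) (hΩ₂ : Ω₂ = d * u - b • (u * d))
    (h1 : d ^ 2 * u = (a + b) • (d * u * d) + (-(a * b)) • (u * d ^ 2))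
    (h2 : d * u ^ 2 = (a + b) • (u * d * u) + (-(a * b)) • (u ^ 2 * d))  :
    d * Ω₁ = b • (Ω₁ * d) ∧
    Ω₁ * u = b • (u * Ω₁) ∧
    d * Ω₂ = a • (Ω₂ * d) ∧
    Ω₂ * u = a • (u * Ω₂) ∧
    (u * d) * Ω₁ = Ω₁ * (u * d) ∧
    (u * d) * Ω₂ = Ω₂ * (u * d) ∧
    (d * u) * Ω₁ = Ω₁ * (d * u) ∧
    (d * u) * Ω₂ = Ω₂ * (d * u) ∧
    Ω₁ * Ω₂ = Ω₂ * Ω₁ := by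
  subst hΩ₁ hΩ₂
  simp only [pow_two, mul_assoc] at h1 h2
  have A1 : d * (d * u - a • (u * d)) = b • ((d * u - a • (u * d)) * d) := by
    simp only [mul_sub, sub_mul, smul_sub, mul_smul_comm, smul_mul_assoc, smul_smul, mul_assoc, h1]
    module
  have A2 : (d * u - a • (u * d)) * u = b • (u * (d * u - a • (u * d))) := by
    simp only [mul_sub, sub_mul, smul_sub, mul_smul_comm, smul_mul_assoc, smul_smul, mul_assoc, h2]
    module
  have B1 : d * (d * u - b • (u * d)) = a • ((d * u - b • (u * d)) * d) := by
    simp only [mul_sub, sub_mul, smul_sub, mul_smul_comm, smul_mul_assoc, smul_smul, mul_assoc, h1]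
    module
  have B2 : (d * u - b • (u * d)) * u = a • (u * (d * u - b • (u * d))) := by
    simp only [mul_sub, sub_mul, smul_sub, mul_smul_comm, smul_mul_assoc, smul_smul, mul_assoc, h2]
    module
  have C1 : (u * d) * (d * u - a • (u * d)) = (d * u - a • (u * d)) * (u * d) := by
    calc (u * d) * (d * u - a • (u * d)) = u * (d * (d * u - a • (u * d))) := by rw [mul_assoc]
    _ = b • (u * ((d * u - a • (u * d)) * d)) := by rw [A1, mul_smul_comm]
    _ = (b • (u * (d * u - a • (u * d)))) * d := by
        rw [smul_mul_assoc, mul_assoc]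
    _ = (d * u - a • (u * d)) * (u * d) := by rw [← A2, mul_assoc]
  have C2 : (u * d) * (d * u - b • (u * d)) = (d * u - b • (u * d)) * (u * d) := by
    calc (u * d) * (d * u - b • (u * d)) = u * (d * (d * u - b • (u * d))) := by rw [mul_assoc]
    _ = a • (u * ((d * u - b • (u * d)) * d)) := by rw [B1, mul_smul_comm]
    _ = (a • (u * (d * u - b • (u * d)))) * d := by
        rw [smul_mul_assoc, mul_assoc]
    _ = (d * u - b • (u * d)) * (u * d) := by rw [← B2, mul_assoc]
  have D1 : (d * u) * (d * u - a • (u * d)) = (d * u - a • (u * d)) * (d * u) := by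
    rw [← sub_eq_zero]
    have expand : d * u * (d * u - a • (u * d)) - (d * u - a • (u * d)) * (d * u)
        = a • ((u * d) * (d * u - a • (u * d)) - (d * u - a • (u * d)) * (u * d)) := by
      simp only [mul_sub, sub_mul, smul_sub, smul_smul, mul_smul_comm, smul_mul_assoc, mul_assoc]
      module
    rw [expand, C1, sub_self, smul_zero]
  have D2 : (d * u) * (d * u - b • (u * d)) = (d * u - b • (u * d)) * (d * u) := by
    rw [← sub_eq_zero]
    have expand : d * u * (d * u - b • (u * d)) - (d * u - b • (u * d)) * (d * u)
        = b • ((u * d) * (d * u - b • (u * d)) - (d * u - b • (u * d)) * (u * d)) := by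
      simp only [mul_sub, sub_mul, smul_sub, smul_smul, mul_smul_comm, smul_mul_assoc, mul_assoc]
      module
    rw [expand, C2, sub_self, smul_zero]
  have F : u * (d * (d * u)) = d * (u * (u * d)) := by
    have h := C1
    simp only [mul_sub, sub_mul, mul_smul_comm, smul_mul_assoc, mul_assoc] at h
    have := congrArg (· + a • (u * (d * (u * d)))) h
    simpa using this
  have E : (d * u - a • (u * d)) * (d * u - b • (u * d)) =
      (d * u - b • (u * d)) * (d * u - a • (u * d)) := by
    simp only [mul_sub, sub_mul, smul_sub, smul_smul, mul_smul_comm, smul_mul_assoc, mul_assoc, F]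
    module
  exact ⟨A1, A2, B1, B2, C1, C2, D1, D2, E⟩
end

section
/- Let R be an associative unital algebra over a field k, let a, b ∈ k be nonzero, set α = a + b and β = −ab, and suppose d, u ∈ R satisfy the down-up relations d²u = α·dud + β·ud² and du² = α·udu + β·u²d. With Ω₁ = du − a·ud and Ω₂ = du − b·ud, for every positive integer n one has: (b−a)·ud = Ω₁ − Ω₂, (b−a)·du = b·Ω₁ − a·Ω₂, (b−a)ⁿ·(ab)^{n(n−1)/2}·uⁿdⁿ = ∏_{i=1}^{n} (a^{i−1}·Ω₁ − b^{i−1}·Ω₂), and (b−a)ⁿ·dⁿuⁿ = ∏_{i=1}^{n} (bⁱ·Ω₁ − aⁱ·Ω₂), where the factors in each product commute pairwise (so the products are well defined in any order). -/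
/-- Lemma 8.1 (denominators cleared): with `Ω₁ = du - a•ud`, `Ω₂ = du - b•ud`
and `d, u` satisfying the down-up relations, one has
`(b-a)•ud = Ω₁ - Ω₂`, `(b-a)•du = b•Ω₁ - a•Ω₂`,
`(b-a)ⁿ (ab)^{n(n-1)/2} • uⁿdⁿ = ∏_{i=1}^{n} (a^{i-1}•Ω₁ - b^{i-1}•Ω₂)` and
`(b-a)ⁿ • dⁿuⁿ = ∏_{i=1}^{n} (bⁱ•Ω₁ - aⁱ•Ω₂)`, with all factors in each
product commuting pairwise. -/
theorem downUp_power_formulas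
    {k : Type*} [Field k] {R : Type*} [Ring R] [Algebra k R]
    (a b : k) (ha : a ≠ 0) (hb : b ≠ 0) (d u Ω₁ Ω₂ : R)
    (hΩ₁ : Ω₁ = d * u - a • (u * d)) (hΩ₂ : Ω₂ = d * u - b • (u * d))
    (h1 : d ^ 2 * u = (a + b) • (d * u * d) + (-(a * b)) • (u * d ^ 2))
    (h2 : d * u ^ 2 = (a + b) • (u * d * u) + (-(a * b)) • (u ^ 2 * d))
    (n : ℕ) (hn : 0 < n) :
    (b - a) • (u * d) = Ω₁ - Ω₂ ∧
    (b - a) • (d * u) = b • Ω₁ - a • Ω₂ ∧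
    (∀ i j : ℕ, Commute (a ^ i • Ω₁ - b ^ i • Ω₂) (a ^ j • Ω₁ - b ^ j • Ω₂)) ∧
    (∀ i j : ℕ, Commute (b ^ i • Ω₁ - a ^ i • Ω₂) (b ^ j • Ω₁ - a ^ j • Ω₂)) ∧
    ((b - a) ^ n * (a * b) ^ (n * (n - 1) / 2)) • (u ^ n * d ^ n) =
      ((List.range n).map (fun i => a ^ i • Ω₁ - b ^ i • Ω₂)).prod ∧
    ((b - a) ^ n) • (d ^ n * u ^ n) =
      ((List.range n).map (fun i => b ^ (i + 1) • Ω₁ - a ^ (i + 1) • Ω₂)).prod := by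
  -- key one-step relations
  have hd1 : d * Ω₁ = b • (Ω₁ * d) := by
    rw [hΩ₁, pow_two] at *
    have h1' : d * (d * u) = (a + b) • (d * u * d) + (-(a * b)) • (u * (d * d)) := by
      rw [← mul_assoc]; exact h1
    rw [mul_sub, mul_smul_comm, h1', ← mul_assoc]
    simp only [smul_sub, sub_mul, smul_mul_assoc, smul_smul, mul_assoc]
    module
  have hd2 : d * Ω₂ = a • (Ω₂ * d) := by
    rw [hΩ₂, pow_two] at *
    have h1' : d * (d * u) = (a + b) • (d * u * d) + (-(a * b)) • (u * (d * d)) := by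
      rw [← mul_assoc]; exact h1
    rw [mul_sub, mul_smul_comm, h1', ← mul_assoc]
    simp only [smul_sub, sub_mul, smul_mul_assoc, smul_smul, mul_assoc]
    module
  have hu1 : Ω₁ * u = b • (u * Ω₁) := by
    rw [hΩ₁, pow_two] at *
    have h2' : (d * u) * u = (a + b) • (u * d * u) + (-(a * b)) • (u * u * d) := by
      rw [mul_assoc]; exact h2
    rw [sub_mul, smul_mul_assoc, h2', mul_assoc u d u]
    simp only [smul_sub, mul_sub, mul_smul_comm, smul_smul, mul_assoc]
    module
  have hu2 : Ω₂ * u = a • (u * Ω₂) := by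
    rw [hΩ₂, pow_two] at *
    have h2' : (d * u) * u = (a + b) • (u * d * u) + (-(a * b)) • (u * u * d) := by
      rw [mul_assoc]; exact h2
    rw [sub_mul, smul_mul_assoc, h2', mul_assoc u d u]
    simp only [smul_sub, mul_sub, mul_smul_comm, smul_smul, mul_assoc]
    module
  -- commutation
  have hc1 : Ω₁ * (u * d) = (u * d) * Ω₁ := by
    calc Ω₁ * (u * d) = (Ω₁ * u) * d := by rw [mul_assoc]
      _ = u * (b • (Ω₁ * d)) := by rw [hu1, smul_mul_assoc, mul_smul_comm, mul_assoc]
      _ = (u * d) * Ω₁ := by rw [← hd1, mul_assoc]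
  have hΩc : Commute Ω₁ Ω₂ := by
    have h12 : Ω₂ = Ω₁ + (a - b) • (u * d) := by rw [hΩ₁, hΩ₂]; module
    rw [h12]
    exact (Commute.refl Ω₁).add_right ((show Commute Ω₁ (u * d) from hc1).smul_right _)
  have comm1 : ∀ i j : ℕ, Commute (a ^ i • Ω₁ - b ^ i • Ω₂) (a ^ j • Ω₁ - b ^ j • Ω₂) :=
    fun i j =>
      ((((Commute.refl Ω₁).smul_left _).smul_right _).sub_right
          ((hΩc.smul_left _).smul_right _)).sub_left
        (((hΩc.symm.smul_left _).smul_right _).sub_right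
          (((Commute.refl Ω₂).smul_left _).smul_right _))
  have comm2 : ∀ i j : ℕ, Commute (b ^ i • Ω₁ - a ^ i • Ω₂) (b ^ j • Ω₁ - a ^ j • Ω₂) :=
    fun i j =>
      ((((Commute.refl Ω₁).smul_left _).smul_right _).sub_right
          ((hΩc.smul_left _).smul_right _)).sub_left
        (((hΩc.symm.smul_left _).smul_right _).sub_right
          (((Commute.refl Ω₂).smul_left _).smul_right _))
  -- base cases
  have B1 : (b - a) • (u * d) = Ω₁ - Ω₂ := by rw [hΩ₁, hΩ₂]; module
  have B2 : (b - a) • (d * u) = b • Ω₁ - a • Ω₂ := by rw [hΩ₁, hΩ₂]; module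
  -- one-factor moves
  have fd : ∀ i : ℕ,
      d * (b ^ (i+1) • Ω₁ - a ^ (i+1) • Ω₂) = (b ^ (i+2) • Ω₁ - a ^ (i+2) • Ω₂) * d := by
    intro i
    rw [mul_sub, sub_mul, mul_smul_comm, mul_smul_comm, hd1, hd2,
      smul_mul_assoc, smul_mul_assoc, smul_smul, smul_smul]
    module
  have fu : ∀ i : ℕ,
      (a * b) • (u * (a ^ i • Ω₁ - b ^ i • Ω₂)) = (a ^ (i+1) • Ω₁ - b ^ (i+1) • Ω₂) * u := by
    intro i
    rw [mul_sub, smul_sub, sub_mul, mul_smul_comm, mul_smul_comm,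
      smul_mul_assoc, smul_mul_assoc, hu1, hu2, smul_smul, smul_smul, smul_smul, smul_smul]
    module
  -- product moves
  have Ld : ∀ m : ℕ,
      d * ((List.range m).map (fun i => b ^ (i+1) • Ω₁ - a ^ (i+1) • Ω₂)).prod =
        ((List.range m).map (fun i => b ^ (i+2) • Ω₁ - a ^ (i+2) • Ω₂)).prod * d := by
    intro m
    induction m with
    | zero => simp
    | succ m ih =>
      rw [List.range_succ, List.map_append, List.map_append, List.prod_append,
        List.prod_append]
      simp only [List.map_cons, List.map_nil, List.prod_cons, List.prod_nil, mul_one]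
      rw [← mul_assoc, ih, mul_assoc, fd m, ← mul_assoc]
  have Lu : ∀ m : ℕ,
      (a * b) ^ m • (u * ((List.range m).map (fun i => a ^ i • Ω₁ - b ^ i • Ω₂)).prod) =
        ((List.range m).map (fun i => a ^ (i+1) • Ω₁ - b ^ (i+1) • Ω₂)).prod * u := by
    intro m
    induction m with
    | zero => simp
    | succ m ih =>
      rw [List.range_succ, List.map_append, List.map_append, List.prod_append,
        List.prod_append]
      simp only [List.map_cons, List.map_nil, List.prod_cons, List.prod_nil, mul_one]
      calc (a * b) ^ (m+1) •
            (u * (((List.range m).map (fun i => a ^ i • Ω₁ - b ^ i • Ω₂)).prod *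
              (a ^ m • Ω₁ - b ^ m • Ω₂)))
          = ((a * b) ^ m •
              (u * ((List.range m).map (fun i => a ^ i • Ω₁ - b ^ i • Ω₂)).prod)) *
              ((a * b) • (a ^ m • Ω₁ - b ^ m • Ω₂)) := by
            simp only [mul_smul_comm, smul_mul_assoc, smul_smul, mul_assoc]
            module
        _ = ((List.range m).map (fun i => a ^ (i+1) • Ω₁ - b ^ (i+1) • Ω₂)).prod *
              (u * ((a * b) • (a ^ m • Ω₁ - b ^ m • Ω₂))) := by
            rw [ih, mul_assoc]
        _ = ((List.range m).map (fun i => a ^ (i+1) • Ω₁ - b ^ (i+1) • Ω₂)).prod *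
              ((a ^ (m+1) • Ω₁ - b ^ (m+1) • Ω₂) * u) := by
            rw [mul_smul_comm, fu m]
        _ = ((List.range m).map (fun i => a ^ (i+1) • Ω₁ - b ^ (i+1) • Ω₂)).prod *
              (a ^ (m+1) • Ω₁ - b ^ (m+1) • Ω₂) * u := by rw [mul_assoc]
  -- main formula for dⁿuⁿ
  have G : ∀ m : ℕ, ((b - a) ^ m) • (d ^ m * u ^ m) =
      ((List.range m).map (fun i => b ^ (i + 1) • Ω₁ - a ^ (i + 1) • Ω₂)).prod := by
    intro m
    induction m with
    | zero => simp
    | succ m ih =>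
      have e1 : d ^ (m+1) * u ^ (m+1) = d * (d ^ m * u ^ m) * u := by
        rw [pow_succ' d, pow_succ u, mul_assoc, mul_assoc, mul_assoc]
      calc ((b - a) ^ (m+1)) • (d ^ (m+1) * u ^ (m+1))
          = (b - a) • (d * (((b - a) ^ m) • (d ^ m * u ^ m)) * u) := by
            rw [e1]
            simp only [mul_smul_comm, smul_mul_assoc, smul_smul, mul_assoc]
            module
        _ = (b - a) •
            ((((List.range m).map (fun i => b ^ (i+2) • Ω₁ - a ^ (i+2) • Ω₂)).prod * d) * u) := by
            rw [ih, Ld m]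
        _ = ((List.range m).map (fun i => b ^ (i+2) • Ω₁ - a ^ (i+2) • Ω₂)).prod *
              ((b - a) • (d * u)) := by
            rw [mul_assoc, mul_smul_comm]
        _ = ((List.range m).map (fun i => b ^ (i+2) • Ω₁ - a ^ (i+2) • Ω₂)).prod *
              (b ^ 1 • Ω₁ - a ^ 1 • Ω₂) := by rw [B2, pow_one, pow_one]
        _ = (b ^ 1 • Ω₁ - a ^ 1 • Ω₂) *
              ((List.range m).map (fun i => b ^ (i+2) • Ω₁ - a ^ (i+2) • Ω₂)).prod := by
            refine ((Commute.list_prod_right _ _ ?_)).symm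
            intro y hy
            simp only [List.mem_map, List.mem_range] at hy
            obtain ⟨i, -, rfl⟩ := hy
            exact comm2 1 (i+2)
        _ = ((List.range (m+1)).map (fun i => b ^ (i + 1) • Ω₁ - a ^ (i + 1) • Ω₂)).prod := by
            rw [List.range_succ_eq_map, List.map_cons, List.prod_cons, List.map_map]
            rfl
  -- main formula for uⁿdⁿ
  have tri : ∀ m : ℕ, (m+1) * ((m+1) - 1) / 2 = m * (m-1) / 2 + m := by
    intro m
    cases m with
    | zero => rfl
    | succ m =>
      simp only [Nat.add_sub_cancel]
      have e : (m+1+1) * (m+1) = (m+1)*m + 2*(m+1) := by ring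
      rw [e, Nat.add_mul_div_left _ _ (by norm_num : (0:ℕ) < 2)]
  have F : ∀ m : ℕ, ((b - a) ^ m * (a * b) ^ (m * (m - 1) / 2)) • (u ^ m * d ^ m) =
      ((List.range m).map (fun i => a ^ i • Ω₁ - b ^ i • Ω₂)).prod := by
    intro m
    induction m with
    | zero => simp
    | succ m ih =>
      have e1 : u ^ (m+1) * d ^ (m+1) = u * (u ^ m * d ^ m) * d := by
        rw [pow_succ' u, pow_succ d, mul_assoc, mul_assoc, mul_assoc]
      calc ((b - a) ^ (m+1) * (a * b) ^ ((m+1) * ((m+1) - 1) / 2)) • (u ^ (m+1) * d ^ (m+1))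
          = (b - a) • ((a * b) ^ m •
              (u * (((b - a) ^ m * (a * b) ^ (m * (m-1) / 2)) • (u ^ m * d ^ m)) * d)) := by
            rw [e1, tri m]
            simp only [mul_smul_comm, smul_mul_assoc, smul_smul, mul_assoc]
            module
        _ = (b - a) • (((a * b) ^ m •
              (u * ((List.range m).map (fun i => a ^ i • Ω₁ - b ^ i • Ω₂)).prod)) * d) := by
            rw [ih, smul_mul_assoc]
        _ = (b - a) •
            ((((List.range m).map (fun i => a ^ (i+1) • Ω₁ - b ^ (i+1) • Ω₂)).prod * u) * d) := by
            rw [Lu m]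
        _ = ((List.range m).map (fun i => a ^ (i+1) • Ω₁ - b ^ (i+1) • Ω₂)).prod *
              ((b - a) • (u * d)) := by rw [mul_assoc, mul_smul_comm]
        _ = ((List.range m).map (fun i => a ^ (i+1) • Ω₁ - b ^ (i+1) • Ω₂)).prod *
              (a ^ 0 • Ω₁ - b ^ 0 • Ω₂) := by rw [B1]; simp
        _ = (a ^ 0 • Ω₁ - b ^ 0 • Ω₂) *
              ((List.range m).map (fun i => a ^ (i+1) • Ω₁ - b ^ (i+1) • Ω₂)).prod := by
            refine ((Commute.list_prod_right _ _ ?_)).symm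
            intro y hy
            simp only [List.mem_map, List.mem_range] at hy
            obtain ⟨i, -, rfl⟩ := hy
            exact comm1 0 (i+1)
        _ = ((List.range (m+1)).map (fun i => a ^ i • Ω₁ - b ^ i • Ω₂)).prod := by
            rw [List.range_succ_eq_map, List.map_cons, List.prod_cons, List.map_map]
            rfl
  exact ⟨B1, B2, comm1, comm2, F n, G n⟩
end

section
/- For every integer n ≥ 1, the polynomial q(X) = (1 + X^{2n})(1 + X⁴) + 4X^{n+2} has a complex root that is not a root of unity; in particular q is not a product of cyclotomic polynomials. -/
open Polynomial

/-- If `z` is a root of unity and a root of `q`, then `z⁴ = 1`, `z^{2n} = 1`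
and `z^{n+2} = -1`. -/
private lemma aux_abs_one_86 (r : ℝ) (h0 : 0 ≤ r) (m : ℕ) (hm : 0 < m) (h : r ^ m = 1) :
    r = 1 := by
  rcases lt_trichotomy r 1 with h1 | h1 | h1
  · exact absurd h (by have := pow_lt_one₀ h0 h1 hm.ne'; linarith)
  · exact h1
  · exact absurd h (by have := one_lt_pow₀ h1 hm.ne'; linarith)

private lemma aux_w_eq_one_86 (w : ℂ) (hw : ‖w‖ = 1)
    (h : ‖1 + w‖ = 2) : w = 1 := by
  have h1 : Complex.normSq (1 + w) = 4 := by
    have := congrArg (· ^ 2) h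
    simpa [Complex.sq_norm] using this.trans (by norm_num)
  have h2 : Complex.normSq w = 1 := by
    have := congrArg (· ^ 2) hw
    simpa [Complex.sq_norm] using this.trans (by norm_num)
  rw [Complex.normSq_apply] at h1 h2
  simp only [Complex.add_re, Complex.add_im, Complex.one_re, Complex.one_im] at h1
  have hre : w.re = 1 := by nlinarith
  have him : w.im = 0 := by nlinarith
  exact Complex.ext (by simp [hre]) (by simp [him])

private lemma aux_root_86 (n : ℕ) (z : ℂ)
    (hz : (1 + z ^ (2*n)) * (1 + z ^ 4) + 4 * z ^ (n+2) = 0)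
    (m : ℕ) (hm : 0 < m) (h1 : z ^ m = 1) :
    z ^ 4 = 1 ∧ z ^ (2*n) = 1 ∧ z ^ (n+2) = -1 := by
  have habs : ‖z‖ = 1 := by
    have := congrArg (‖·‖) h1
    rw [norm_pow, norm_one] at this
    exact aux_abs_one_86 _ (norm_nonneg z) m hm this
  have hprod : ‖1 + z ^ (2*n)‖ * ‖1 + z ^ 4‖ = 4 := by
    have he : (1 + z ^ (2*n)) * (1 + z ^ 4) = -(4 * z ^ (n+2)) := by linear_combination hz
    have := congrArg (‖·‖) he
    rw [norm_mul] at this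
    rw [this]
    simp [norm_mul, norm_pow, habs]
  have hb1 : ‖1 + z ^ (2*n)‖ ≤ 2 := by
    calc ‖1 + z ^ (2*n)‖ ≤ ‖(1:ℂ)‖ + ‖z ^ (2*n)‖ :=
      norm_add_le _ _
    _ = 2 := by rw [norm_pow, habs]; norm_num
  have hb2 : ‖1 + z ^ 4‖ ≤ 2 := by
    calc ‖1 + z ^ 4‖ ≤ ‖(1:ℂ)‖ + ‖z ^ 4‖ := norm_add_le _ _
    _ = 2 := by rw [norm_pow, habs]; norm_num
  have hn1 : ‖1 + z ^ (2*n)‖ = 2 := by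
    nlinarith [norm_nonneg (1 + z ^ (2*n)), norm_nonneg (1 + z ^ 4)]
  have hn2 : ‖1 + z ^ 4‖ = 2 := by
    nlinarith [norm_nonneg (1 + z ^ (2*n)), norm_nonneg (1 + z ^ 4)]
  have e1 : z ^ (2*n) = 1 := aux_w_eq_one_86 _ (by simp [map_pow, habs]) hn1
  have e2 : z ^ 4 = 1 := aux_w_eq_one_86 _ (by simp [map_pow, habs]) hn2
  refine ⟨e2, e1, ?_⟩
  have : (4 : ℂ) * z ^ (n+2) = -4 := by
    rw [e1, e2] at hz; linear_combination hz
  linear_combination this / 4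

private lemma aux_ns_odd_86 (n : ℕ) (hodd : Odd n) (z : ℂ) (h4 : z ^ 4 = 1)
    (h2n : z ^ (2*n) = 1) (hn2 : z ^ (n+2) = -1) : Complex.normSq (1 - z) = 4 := by
  have hsq : (z ^ 2 - 1) * (z ^ 2 + 1) = 0 := by linear_combination h4
  rcases mul_eq_zero.mp hsq with h | h
  · have hz2 : z ^ 2 = 1 := by linear_combination h
    have hz1 : (z - 1) * (z + 1) = 0 := by linear_combination hz2
    rcases mul_eq_zero.mp hz1 with h' | h'
    · exfalso
      have : z = 1 := by linear_combination h'
      rw [this, one_pow] at hn2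
      norm_num at hn2
    · have : z = -1 := by linear_combination h'
      rw [this]
      norm_num [Complex.normSq_apply]
  · exfalso
    have hz2 : z ^ 2 = -1 := by linear_combination h
    rw [pow_mul, hz2, hodd.neg_one_pow] at h2n
    norm_num at h2n

private lemma aux_ns_even_86 (n : ℕ) (heven : Even n) (z : ℂ) (h4 : z ^ 4 = 1)
    (hn2 : z ^ (n+2) = -1) : Complex.normSq (1 - z) = 2 := by
  have hsq : (z ^ 2 - 1) * (z ^ 2 + 1) = 0 := by linear_combination h4
  have hz2 : z ^ 2 = -1 := by
    rcases mul_eq_zero.mp hsq with h | h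
    · exfalso
      have hz2 : z ^ 2 = 1 := by linear_combination h
      obtain ⟨k, hk⟩ := heven
      have : z ^ (n + 2) = 1 := by
        have : n + 2 = 2 * (k + 1) := by omega
        rw [this, pow_mul, hz2, one_pow]
      rw [this] at hn2; norm_num at hn2
    · linear_combination h
  have hzz : z * z = -1 := by linear_combination hz2
  rw [Complex.ext_iff] at hzz
  simp only [Complex.mul_re, Complex.mul_im, Complex.neg_re, Complex.neg_im,
    Complex.one_re, Complex.one_im, neg_zero] at hzz
  obtain ⟨hre, him⟩ := hzz
  have hre0 : z.re = 0 := by nlinarith [sq_nonneg z.re, sq_nonneg z.im]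
  have him1 : z.im * z.im = 1 := by nlinarith
  simp [Complex.normSq_apply, Complex.sub_re, Complex.sub_im, hre0]
  nlinarith

private lemma aux_exists_86 (n : ℕ) (hn : 1 ≤ n) :
    ∃ z : ℂ, (1 + z ^ (2 * n)) * (1 + z ^ 4) + 4 * z ^ (n + 2) = 0 ∧
      ∀ m : ℕ, 0 < m → z ^ m ≠ 1 := by
  by_contra hcon
  push_neg at hcon
  set P : Polynomial ℂ := (1 + X ^ (2*n)) * (1 + X ^ 4) + 4 * X ^ (n+2) with hPdef
  have hmonic : P.Monic := by
    rw [hPdef]; monicity!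
    rw [if_pos (by omega : n ≤ 2*n+2), if_neg (by omega : ¬n = 0),
      if_neg (by omega : ¬2*n+4 ≤ n+2)]
  have hdeg : P.natDegree = 2*n+4 := by
    rw [hPdef]; compute_degree! <;> omega
  have hsplits : Splits P := IsAlgClosed.splits P
  have hcard : Multiset.card P.roots = 2*n+4 := by
    rw [splits_iff_card_roots.mp hsplits, hdeg]
  have hfact := hsplits.eq_prod_roots_of_monic hmonic
  have heval : ((P.roots.map fun a => 1 - a).prod : ℂ) = 8 := by
    have h1 := congrArg (eval 1) hfact
    rw [hPdef] at h1
    simp only [eval_add, eval_mul, eval_pow, eval_one, eval_X, eval_ofNat,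
      eval_multiset_prod, Multiset.map_map, Function.comp, eval_sub, eval_C] at h1
    rw [← h1]; norm_num
  have hroots : ∀ z ∈ P.roots, z ^ 4 = 1 ∧ z ^ (2*n) = 1 ∧ z ^ (n+2) = -1 := by
    intro z hzmem
    have hz0 : eval z P = 0 := (mem_roots (hmonic.ne_zero)).mp hzmem
    rw [hPdef] at hz0
    simp only [eval_add, eval_mul, eval_pow, eval_one, eval_X, eval_ofNat] at hz0
    obtain ⟨m, hm, hm1⟩ := hcon z hz0
    exact aux_root_86 n z hz0 m hm hm1
  have hnorm : ((P.roots.map fun a => Complex.normSq (1 - a)).prod : ℝ) = 64 := by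
    have := congrArg Complex.normSq heval
    rw [map_multiset_prod, Multiset.map_map] at this
    simpa [Complex.normSq_apply, Function.comp_def] using this.trans (by norm_num [Complex.normSq_apply] : Complex.normSq (8:ℂ) = 64)
  rcases Nat.even_or_odd n with heven | hodd
  · have hrepl : P.roots.map (fun a => Complex.normSq (1 - a)) =
        Multiset.replicate (2*n+4) (2:ℝ) := by
      rw [Multiset.eq_replicate]
      constructor
      · simp [hcard]
      · intro b hb
        obtain ⟨z, hz, rfl⟩ := Multiset.mem_map.mp hb
        obtain ⟨h4, h2n, hn2⟩ := hroots z hz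
        exact aux_ns_even_86 n heven z h4 hn2
    rw [hrepl, Multiset.prod_replicate] at hnorm
    have h8 : (2:ℝ)^8 ≤ 2^(2*n+4) :=
      pow_le_pow_right₀ (by norm_num) (by obtain ⟨k, hk⟩ := heven; omega)
    rw [hnorm] at h8; norm_num at h8
  · have hrepl : P.roots.map (fun a => Complex.normSq (1 - a)) =
        Multiset.replicate (2*n+4) (4:ℝ) := by
      rw [Multiset.eq_replicate]
      constructor
      · simp [hcard]
      · intro b hb
        obtain ⟨z, hz, rfl⟩ := Multiset.mem_map.mp hb
        obtain ⟨h4, h2n, hn2⟩ := hroots z hz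
        exact aux_ns_odd_86 n hodd z h4 h2n hn2
    rw [hrepl, Multiset.prod_replicate] at hnorm
    have h8 : (4:ℝ)^6 ≤ 4^(2*n+4) := pow_le_pow_right₀ (by norm_num) (by omega)
    rw [hnorm] at h8; norm_num at h8

/-- Lemma 8.6(2): for `n ≥ 1`, `q(X) = (1 + X^{2n})(1 + X⁴) + 4X^{n+2}`
has a complex root that is not a root of unity; in particular `q` is not a
product of cyclotomic polynomials. -/
theorem not_cyclotomic_product_two
    (n : ℕ) (hn : 1 ≤ n) :
    (∃ z : ℂ, (1 + z ^ (2 * n)) * (1 + z ^ 4) + 4 * z ^ (n + 2) = 0 ∧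
      ∀ m : ℕ, 0 < m → z ^ m ≠ 1) ∧
    ¬ ∃ s : Multiset ℕ, (∀ m ∈ s, 0 < m) ∧
      ((1 + X ^ (2 * n)) * (1 + X ^ 4) + 4 * X ^ (n + 2) : Polynomial ℤ) =
        (s.map (fun m => cyclotomic m ℤ)).prod := by
  obtain ⟨z, hz, hzu⟩ := aux_exists_86 n hn
  refine ⟨⟨z, hz, hzu⟩, ?_⟩
  rintro ⟨s, hs, hEq⟩
  have h := congrArg (aeval z : Polynomial ℤ → ℂ) hEq
  rw [map_multiset_prod, Multiset.map_map] at h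
  simp only [map_add, map_mul, map_one, map_pow, aeval_X, map_ofNat, Function.comp] at h
  rw [hz] at h
  have h0 : (0:ℂ) ∈ s.map (fun m => aeval z (cyclotomic m ℤ)) := by
    rw [← Multiset.prod_eq_zero_iff]
    exact h.symm
  obtain ⟨m, hm, hm0⟩ := Multiset.mem_map.mp h0
  have hmpos := hs m hm
  haveI : NeZero (m : ℂ) := ⟨by exact_mod_cast hmpos.ne'⟩
  have hroot : IsRoot (cyclotomic m ℂ) z := by
    rw [IsRoot, ← hm0, aeval_def, eval₂_eq_eval_map, map_cyclotomic]
  have hprim : IsPrimitiveRoot z m := (isRoot_cyclotomic_iff).mp hroot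
  exact hzu m hmpos hprim.pow_eq_one
end

section
/- For every natural number n ≥ 1 and every real number s with 0 < s ≤ 1/8, one has cos(4πs)·cos(2πns) + (cos(2πs))² > 0; indeed cos(4πs)·(cos(2πns) + 1) ≥ 0 and cos(4πs)·cos(2πns) + (cos(2πs))² ≥ (sin(2πs))². -/
open Real

/-- The key estimate in the proof of Lemma 8.6(1): for `n ≥ 1` and
`0 < s ≤ 1/8`, one has `cos(4πs)(cos(2πns) + 1) ≥ 0`,
`cos(4πs)cos(2πns) + cos²(2πs) ≥ sin²(2πs)`, and hence
`cos(4πs)cos(2πns) + cos²(2πs) > 0`. -/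
theorem cos_estimate
    (n : ℕ) (hn : 1 ≤ n) (s : ℝ) (hs0 : 0 < s) (hs : s ≤ 1 / 8) :
    Real.cos (4 * π * s) * (Real.cos (2 * π * n * s) + 1) ≥ 0 ∧
    Real.cos (4 * π * s) * Real.cos (2 * π * n * s) + (Real.cos (2 * π * s)) ^ 2
      ≥ (Real.sin (2 * π * s)) ^ 2 ∧
    Real.cos (4 * π * s) * Real.cos (2 * π * n * s) + (Real.cos (2 * π * s)) ^ 2 > 0 := by
  have hπ := Real.pi_pos
  have hcos4 : 0 ≤ Real.cos (4 * π * s) := by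
    apply Real.cos_nonneg_of_mem_Icc
    constructor
    · nlinarith
    · nlinarith
  have hN : Real.cos (2 * π * n * s) + 1 ≥ 0 := by
    nlinarith [Real.neg_one_le_cos (2 * π * n * s)]
  have h1 : Real.cos (4 * π * s) * (Real.cos (2 * π * n * s) + 1) ≥ 0 :=
    mul_nonneg hcos4 hN
  have hdouble : Real.cos (4 * π * s)
      = (Real.cos (2 * π * s)) ^ 2 - (Real.sin (2 * π * s)) ^ 2 := by
    have := Real.cos_sq (2 * π * s)
    have h4 : (4:ℝ) * π * s = 2 * (2 * π * s) := by ring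
    rw [h4, Real.cos_two_mul]
    nlinarith [Real.sin_sq_add_cos_sq (2 * π * s)]
  have h2 : Real.cos (4 * π * s) * Real.cos (2 * π * n * s) + (Real.cos (2 * π * s)) ^ 2
      ≥ (Real.sin (2 * π * s)) ^ 2 := by nlinarith
  have hsin : 0 < Real.sin (2 * π * s) := by
    apply Real.sin_pos_of_pos_of_lt_pi
    · nlinarith
    · nlinarith
  exact ⟨h1, h2, lt_of_lt_of_le (by positivity) h2⟩
end

section
/- Let R be an associative unital ring and X, Y ∈ R elements satisfying YX = −XY. Then 4·(XY)² + (X + Y)·((X − Y)XY) + ((X − Y)XY)·(X + Y) = 0; that is, setting X₁ = X + Y and X₂ = (X − Y)XY, one has (XY)² = −(1/4)(X₁X₂ + X₂X₁) whenever 4 is invertible. -/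
/-- Remark 2.6: if `YX = -XY`, then with `X₁ = X + Y` and `X₂ = (X - Y)XY` one
has `4(XY)² + X₁X₂ + X₂X₁ = 0`; that is, `(XY)² = -(1/4)(X₁X₂ + X₂X₁)`
whenever `4` is invertible. -/
theorem skew_fixed_ring_identity
    {R : Type*} [Ring R] (X Y : R) (h : Y * X = -(X * Y)) :
    4 * (X * Y) ^ 2 + (X + Y) * ((X - Y) * X * Y) + ((X - Y) * X * Y) * (X + Y) = 0 ∧
    ∀ w : Invertible (4 : R),
      (X * Y) ^ 2 =
        -(w.invOf * ((X + Y) * ((X - Y) * X * Y) + ((X - Y) * X * Y) * (X + Y))) := by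
  have h' : ∀ a : R, Y * (X * a) = -(X * (Y * a)) := fun a => by
    rw [← mul_assoc, h, neg_mul, mul_assoc]
  have key : 4 * (X * Y) ^ 2 + (X + Y) * ((X - Y) * X * Y) + ((X - Y) * X * Y) * (X + Y) = 0 := by
    simp only [pow_two, mul_add, add_mul, sub_mul, mul_sub, mul_assoc, h, h',
      mul_neg, neg_mul, neg_neg, neg_sub, sub_neg_eq_add]
    noncomm_ring
  refine ⟨key, fun w => ?_⟩
  rw [add_assoc] at key
  have : (X + Y) * ((X - Y) * X * Y) + ((X - Y) * X * Y) * (X + Y) = -(4 * (X * Y) ^ 2) :=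
    eq_neg_of_add_eq_zero_right key
  rw [this, mul_neg, neg_neg, ← mul_assoc, invOf_mul_self, one_mul]
end

section
/- Let R be an associative unital ring, X, Y ∈ R with YX = −XY, and let n = 2m be an even positive integer. Setting X₁ = Xⁿ + Yⁿ, X₂ = (Xⁿ − Yⁿ)XY, and X₃ = (XY)², one has X₂² − X₁²·X₃ + 4·(−1)^{n(n−1)/2}·X₃^{n/2+1} = 0. -/
/-- Lemma 2.5 (Case (ii), `n` even): if `YX = -XY` and `n = 2m > 0`, then with
`X₁ = Xⁿ + Yⁿ`, `X₂ = (Xⁿ - Yⁿ)XY`, `X₃ = (XY)²` one has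
`X₂² - X₁²X₃ + 4(-1)^{n(n-1)/2} X₃^{n/2+1} = 0`. -/
theorem dihedral_relation_even
    {R : Type*} [Ring R] (X Y : R) (h : Y * X = -(X * Y))
    (m : ℕ) (hm : 0 < m) (n : ℕ) (hn : n = 2 * m)
    (X₁ X₂ X₃ : R)
    (hX₁ : X₁ = X ^ n + Y ^ n) (hX₂ : X₂ = (X ^ n - Y ^ n) * X * Y)
    (hX₃ : X₃ = (X * Y) ^ 2) :
    X₂ ^ 2 - X₁ ^ 2 * X₃ + 4 * (-1 : R) ^ (n * (n - 1) / 2) * X₃ ^ (n / 2 + 1) = 0 := by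
  subst hn hX₁ hX₂ hX₃
  have h' : X * Y = -(Y * X) := by rw [h, neg_neg]
  have cX : Commute X (Y ^ 2) := by
    show X * Y ^ 2 = Y ^ 2 * X
    rw [pow_two]
    calc X * (Y * Y) = (X * Y) * Y := by rw [mul_assoc]
      _ = (-(Y * X)) * Y := by rw [h']
      _ = -(Y * (X * Y)) := by rw [neg_mul, mul_assoc]
      _ = -(Y * (-(Y * X))) := by rw [h']
      _ = (Y * Y) * X := by rw [mul_neg, neg_neg, mul_assoc]
  have cY : Commute Y (X ^ 2) := by
    show Y * X ^ 2 = X ^ 2 * Y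
    rw [pow_two]
    calc Y * (X * X) = (Y * X) * X := by rw [mul_assoc]
      _ = (-(X * Y)) * X := by rw [h]
      _ = -(X * (Y * X)) := by rw [neg_mul, mul_assoc]
      _ = -(X * (-(X * Y))) := by rw [h]
      _ = (X * X) * Y := by rw [mul_neg, neg_neg, mul_assoc]
  have cab : Commute (X ^ 2) (Y ^ 2) := cX.pow_left 2
  have hXn : X ^ (2 * m) = (X ^ 2) ^ m := by rw [pow_mul]
  have hYn : Y ^ (2 * m) = (Y ^ 2) ^ m := by rw [pow_mul]
  have hXY2 : (X * Y) ^ 2 = -(X ^ 2 * Y ^ 2) := by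
    rw [pow_two, pow_two, pow_two]
    calc (X * Y) * (X * Y) = X * ((Y * X) * Y) := by rw [mul_assoc, mul_assoc]
      _ = X * ((-(X * Y)) * Y) := by rw [h]
      _ = -((X * X) * (Y * Y)) := by noncomm_ring
  have cAB : Commute ((X ^ 2) ^ m) ((Y ^ 2) ^ m) := (cab.pow_left m).pow_right m
  have cAX : Commute ((X ^ 2) ^ m) X := ((Commute.refl X).pow_right 2).symm.pow_left m
  have cAY : Commute ((X ^ 2) ^ m) Y := cY.symm.pow_left m
  have cBX : Commute ((Y ^ 2) ^ m) X := cX.symm.pow_left m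
  have cBY : Commute ((Y ^ 2) ^ m) Y := ((Commute.refl Y).pow_right 2).symm.pow_left m
  have cD : Commute ((X ^ 2) ^ m - (Y ^ 2) ^ m) (X * Y) :=
    (cAX.sub_left cBX).mul_right (cAY.sub_left cBY)
  have hX2sq : ((X ^ (2 * m) - Y ^ (2 * m)) * X * Y) ^ 2
      = ((X ^ 2) ^ m - (Y ^ 2) ^ m) ^ 2 * (X * Y) ^ 2 := by
    rw [hXn, hYn, mul_assoc]
    exact cD.mul_pow 2
  rw [hX2sq, hXn, hYn, hXY2]
  have e1 : 2 * m / 2 + 1 = m + 1 := by omega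
  have e2 : 2 * m * (2 * m - 1) / 2 = m * (2 * m - 1) := by
    rw [mul_assoc]; exact Nat.mul_div_cancel_left _ (by norm_num)
  rw [e1, e2]
  have hsign : (-1 : R) ^ (m * (2 * m - 1)) * (-1 : R) ^ (m + 1) = -1 := by
    rw [← pow_add]
    refine Odd.neg_one_pow ⟨m * m, ?_⟩
    obtain ⟨k, rfl⟩ : ∃ k, m = k + 1 := ⟨m - 1, by omega⟩
    have h3 : 2 * (k + 1) - 1 = 2 * k + 1 := by omega
    rw [h3]; ring
  have hCpow : (-(X ^ 2 * Y ^ 2)) ^ (m + 1)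
      = (-1 : R) ^ (m + 1) * ((X ^ 2) ^ (m + 1) * (Y ^ 2) ^ (m + 1)) := by
    rw [neg_pow, cab.mul_pow]
  rw [hCpow]
  have key : (X ^ 2) ^ m * (Y ^ 2) ^ m * (X ^ 2 * Y ^ 2)
      = (X ^ 2) ^ (m + 1) * (Y ^ 2) ^ (m + 1) := by
    calc (X ^ 2) ^ m * (Y ^ 2) ^ m * (X ^ 2 * Y ^ 2)
        = (X ^ 2) ^ m * ((Y ^ 2) ^ m * X ^ 2) * Y ^ 2 := by
          rw [mul_assoc, mul_assoc, mul_assoc]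
      _ = (X ^ 2) ^ m * (X ^ 2 * (Y ^ 2) ^ m) * Y ^ 2 := by
          rw [(cab.symm.pow_left m).eq]
      _ = ((X ^ 2) ^ m * X ^ 2) * ((Y ^ 2) ^ m * Y ^ 2) := by
          rw [mul_assoc, mul_assoc, mul_assoc]
      _ = (X ^ 2) ^ (m + 1) * (Y ^ 2) ^ (m + 1) := by rw [← pow_succ, ← pow_succ]
  have h1 : ((X ^ 2) ^ m - (Y ^ 2) ^ m) ^ 2 * -(X ^ 2 * Y ^ 2)
      - ((X ^ 2) ^ m + (Y ^ 2) ^ m) ^ 2 * -(X ^ 2 * Y ^ 2)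
      = 4 * ((X ^ 2) ^ (m + 1) * (Y ^ 2) ^ (m + 1)) := by
    have expand : ((X ^ 2) ^ m + (Y ^ 2) ^ m) ^ 2 - ((X ^ 2) ^ m - (Y ^ 2) ^ m) ^ 2
        = 4 * ((X ^ 2) ^ m * (Y ^ 2) ^ m) := by
      rw [pow_two ((X ^ 2) ^ m + (Y ^ 2) ^ m), pow_two ((X ^ 2) ^ m - (Y ^ 2) ^ m)]
      simp only [mul_add, add_mul, mul_sub, sub_mul]
      rw [cAB.symm.eq]
      noncomm_ring
    calc ((X ^ 2) ^ m - (Y ^ 2) ^ m) ^ 2 * -(X ^ 2 * Y ^ 2)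
        - ((X ^ 2) ^ m + (Y ^ 2) ^ m) ^ 2 * -(X ^ 2 * Y ^ 2)
        = (((X ^ 2) ^ m + (Y ^ 2) ^ m) ^ 2 - ((X ^ 2) ^ m - (Y ^ 2) ^ m) ^ 2)
            * (X ^ 2 * Y ^ 2) := by noncomm_ring
      _ = 4 * ((X ^ 2) ^ m * (Y ^ 2) ^ m) * (X ^ 2 * Y ^ 2) := by rw [expand]
      _ = 4 * ((X ^ 2) ^ (m + 1) * (Y ^ 2) ^ (m + 1)) := by rw [mul_assoc, key]
  have h2 : (4 : R) * (-1 : R) ^ (m * (2 * m - 1))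
        * ((-1 : R) ^ (m + 1) * ((X ^ 2) ^ (m + 1) * (Y ^ 2) ^ (m + 1)))
      = -(4 * ((X ^ 2) ^ (m + 1) * (Y ^ 2) ^ (m + 1))) := by
    rw [mul_assoc, ← mul_assoc ((-1 : R) ^ (m * (2 * m - 1))), hsign]
    noncomm_ring
  rw [h1, h2, add_neg_cancel]
end

section
/- Let R be an associative unital ring, X, Y ∈ R with YX = −XY, and let n be an odd positive integer. Setting X₁ = Xⁿ + Yⁿ, X₂ = (Xⁿ − Yⁿ)XY, and X₃ = (XY)², one has X₂X₁ + X₁X₂ = −4·(−1)^{n(n−1)/2}·X₃^{(n+1)/2} and X₂² + X₁²·X₃ = 0. -/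
private lemma neg_one_pow_mul_left {R : Type*} [Ring R] (m : ℕ) (x y : R) :
    x * ((-1 : R) ^ m * y) = (-1 : R) ^ m * (x * y) := by
  rw [← mul_assoc, ← ((Commute.neg_one_left x).pow_left m).eq, mul_assoc]

private lemma skew_pow {R : Type*} [Ring R] (a b : R) (h : b * a = -(a * b)) (m : ℕ) :
    b ^ m * a = (-1 : R) ^ m * (a * b ^ m) := by
  induction m with
  | zero => simp
  | succ m ih =>
    calc b ^ (m + 1) * a = b * (b ^ m * a) := by rw [pow_succ', mul_assoc]
      _ = b * ((-1 : R) ^ m * (a * b ^ m)) := by rw [ih]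
      _ = (-1 : R) ^ m * ((b * a) * b ^ m) := by
          rw [neg_one_pow_mul_left, mul_assoc]
      _ = (-1 : R) ^ m * (-(a * b) * b ^ m) := by rw [h]
      _ = (-1 : R) ^ (m + 1) * (a * b ^ (m + 1)) := by
          rw [pow_succ (-1 : R), pow_succ' b,
            show (a * (b * b ^ m)) = (a * b) * b ^ m by rw [mul_assoc]]
          noncomm_ring

private lemma tri_succ (m : ℕ) : (m + 1) * (m + 1 - 1) / 2 = m * (m - 1) / 2 + m := by
  rw [← Nat.choose_two_right, ← Nat.choose_two_right, Nat.choose_succ_succ,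
    Nat.choose_one_right, Nat.add_comm]

private lemma prod_pow_skew {R : Type*} [Ring R] (a b : R) (h : b * a = -(a * b)) (m : ℕ) :
    (a * b) ^ m = (-1 : R) ^ (m * (m - 1) / 2) * (a ^ m * b ^ m) := by
  induction m with
  | zero => simp
  | succ m ih =>
    calc (a * b) ^ (m + 1) = (a * b) ^ m * (a * b) := pow_succ _ _
      _ = (-1 : R) ^ (m * (m - 1) / 2) * (a ^ m * ((b ^ m * a) * b)) := by
          rw [ih]; noncomm_ring
      _ = (-1 : R) ^ (m * (m - 1) / 2) * (a ^ m * (((-1 : R) ^ m * (a * b ^ m)) * b)) := by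
          rw [skew_pow a b h m]
      _ = (-1 : R) ^ (m * (m - 1) / 2) * ((-1 : R) ^ m * (a ^ (m + 1) * b ^ (m + 1))) := by
          rw [mul_assoc ((-1 : R) ^ m), neg_one_pow_mul_left, pow_succ a, pow_succ b]
          noncomm_ring
      _ = (-1 : R) ^ ((m + 1) * (m + 1 - 1) / 2) * (a ^ (m + 1) * b ^ (m + 1)) := by
          rw [tri_succ, pow_add (-1 : R) (m * (m - 1) / 2) m, mul_assoc]

private lemma key_abstract {R : Type*} [Ring R] (A B P : R)
    (hPA : P * A = -(A * P)) (hPB : P * B = -(B * P)) (hBA : B * A = -(A * B)) :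
    ((A - B) * P) * (A + B) + (A + B) * ((A - B) * P) = -(4 * (A * B * P)) ∧
    ((A - B) * P) ^ 2 + (A + B) ^ 2 * P ^ 2 = 0 := by
  have hsum : P * (A + B) = -((A + B) * P) := by rw [mul_add, hPA, hPB]; noncomm_ring
  have hdiff : P * (A - B) = -((A - B) * P) := by rw [mul_sub, hPA, hPB]; noncomm_ring
  constructor
  · calc ((A - B) * P) * (A + B) + (A + B) * ((A - B) * P)
        = (A - B) * (P * (A + B)) + (A + B) * ((A - B) * P) := by noncomm_ring
      _ = (A - B) * (-((A + B) * P)) + (A + B) * ((A - B) * P) := by rw [hsum]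
      _ = 2 * (B * A) * P - 2 * (A * B) * P := by noncomm_ring
      _ = 2 * (-(A * B)) * P - 2 * (A * B) * P := by rw [hBA]
      _ = -(4 * (A * B * P)) := by noncomm_ring
  · calc ((A - B) * P) ^ 2 + (A + B) ^ 2 * P ^ 2
        = (A - B) * (P * (A - B)) * P + (A + B) ^ 2 * P ^ 2 := by noncomm_ring
      _ = (A - B) * (-((A - B) * P)) * P + (A + B) ^ 2 * P ^ 2 := by rw [hdiff]
      _ = 2 * (A * B) * (P * P) + 2 * (B * A) * (P * P) := by noncomm_ring
      _ = 2 * (A * B) * (P * P) + 2 * (-(A * B)) * (P * P) := by rw [hBA]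
      _ = 0 := by noncomm_ring

/-- Lemma 2.5 (Case (ii), `n` odd): if `YX = -XY` and `n` is odd positive,
then with `X₁ = Xⁿ + Yⁿ`, `X₂ = (Xⁿ - Yⁿ)XY`, `X₃ = (XY)²` one has
`X₂X₁ + X₁X₂ = -4(-1)^{n(n-1)/2} X₃^{(n+1)/2}` and `X₂² + X₁²X₃ = 0`. -/
theorem dihedral_relation_odd
    {R : Type*} [Ring R] (X Y : R) (h : Y * X = -(X * Y))
    (n : ℕ) (hodd : Odd n) (hn : 0 < n)
    (X₁ X₂ X₃ : R)
    (hX₁ : X₁ = X ^ n + Y ^ n) (hX₂ : X₂ = (X ^ n - Y ^ n) * X * Y)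
    (hX₃ : X₃ = (X * Y) ^ 2) :
    X₂ * X₁ + X₁ * X₂ = -(4 * (-1 : R) ^ (n * (n - 1) / 2) * X₃ ^ ((n + 1) / 2)) ∧
    X₂ ^ 2 + X₁ ^ 2 * X₃ = 0 := by
  have hXY : X * Y = -(Y * X) := by rw [h, neg_neg]
  have hYnX : Y ^ n * X = -(X * Y ^ n) := by
    rw [skew_pow X Y h n, hodd.neg_one_pow, neg_one_mul]
  have hXnY : X ^ n * Y = -(Y * X ^ n) := by
    rw [skew_pow Y X hXY n, hodd.neg_one_pow, neg_one_mul]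
  have hPA : (X * Y) * X ^ n = -(X ^ n * (X * Y)) := by
    calc X * Y * X ^ n = X * (Y * X ^ n) := by rw [mul_assoc]
      _ = X * (-(X ^ n * Y)) := by rw [← neg_neg (Y * X ^ n), ← hXnY]
      _ = -(X ^ n * (X * Y)) := by
          rw [show X ^ n * (X * Y) = (X ^ n * X) * Y by rw [mul_assoc],
            show X * -(X ^ n * Y) = -((X * X ^ n) * Y) by noncomm_ring,
            ← pow_succ', ← pow_succ]
  have hPB : (X * Y) * Y ^ n = -(Y ^ n * (X * Y)) := by
    calc X * Y * Y ^ n = X * Y ^ (n + 1) := by rw [mul_assoc, ← pow_succ']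
      _ = -(Y ^ n * (X * Y)) := by
          rw [show Y ^ n * (X * Y) = (Y ^ n * X) * Y by noncomm_ring, hYnX, pow_succ]
          noncomm_ring
  have hBA : Y ^ n * X ^ n = -(X ^ n * Y ^ n) := by
    have hy : Y * X ^ n = -(X ^ n * Y) := by rw [hXnY, neg_neg]
    rw [skew_pow (X ^ n) Y hy n, hodd.neg_one_pow, neg_one_mul]
  have hABP : X ^ n * Y ^ n * (X * Y) = -(X ^ (n + 1) * Y ^ (n + 1)) := by
    calc X ^ n * Y ^ n * (X * Y) = X ^ n * ((Y ^ n * X) * Y) := by noncomm_ring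
      _ = X ^ n * ((-(X * Y ^ n)) * Y) := by rw [hYnX]
      _ = -(X ^ (n + 1) * Y ^ (n + 1)) := by rw [pow_succ X n, pow_succ Y n]; noncomm_ring
  obtain ⟨hmain, hsq⟩ := key_abstract (X ^ n) (Y ^ n) (X * Y) hPA hPB hBA
  have hX2' : X₂ = (X ^ n - Y ^ n) * (X * Y) := by rw [hX₂, mul_assoc]
  rw [hX₁, hX2', hX₃]
  refine ⟨?_, ?_⟩
  · rw [hmain, hABP]
    have hpow : ((X * Y) ^ 2) ^ ((n + 1) / 2) = (X * Y) ^ (n + 1) := by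
      rw [← pow_mul]
      congr 1
      obtain ⟨k, rfl⟩ := hodd
      omega
    rw [hpow, prod_pow_skew X Y h (n + 1)]
    obtain ⟨k, rfl⟩ := hodd
    set n := 2 * k + 1 with hne
    have e1 : n * (n - 1) / 2 = n * k := by
      rw [show n - 1 = 2 * k from by omega,
        show n * (2 * k) = 2 * (n * k) from by ring,
        Nat.mul_div_cancel_left _ (by norm_num)]
    have e2 : (n + 1) * (n + 1 - 1) / 2 = (k + 1) * n := by
      rw [Nat.add_sub_cancel, show (n + 1) * n = 2 * ((k + 1) * n) from by rw [hne]; ring,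
        Nat.mul_div_cancel_left _ (by norm_num)]
    have hexp : n * (n - 1) / 2 + (n + 1) * (n + 1 - 1) / 2 = n * n := by
      rw [e1, e2, hne]; ring
    have hsgn : (-1 : R) ^ (n * (n - 1) / 2) * (-1 : R) ^ ((n + 1) * (n + 1 - 1) / 2)
        = -1 := by
      rw [← pow_add, hexp]
      exact Odd.neg_one_pow ⟨2 * k * k + 2 * k, by rw [hne]; ring⟩
    calc -(4 * -(X ^ (n + 1) * Y ^ (n + 1)))
        = -(4 * (((-1 : R) ^ (n * (n - 1) / 2) * (-1 : R) ^ ((n + 1) * (n + 1 - 1) / 2))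
            * (X ^ (n + 1) * Y ^ (n + 1)))) := by rw [hsgn]; noncomm_ring
      _ = -(4 * (-1 : R) ^ (n * (n - 1) / 2) *
            ((-1 : R) ^ ((n + 1) * (n + 1 - 1) / 2) * (X ^ (n + 1) * Y ^ (n + 1)))) := by
          rw [mul_assoc (4 : R), mul_assoc]
  · exact hsq
end

section
/- Let n ≥ 1 be an integer, ε ∈ ℂ a primitive 2n-th root of unity, and t ∈ ℂ with t^{2n} ≠ 1 and t⁴ ≠ 1. Then ∑_{i=0}^{2n−1} 1/((1 + εⁱt)(1 − ε^{−i}t)) = 2n(1 − t^{4n})(1 − t²) / ((1 − t^{2n})²(1 − t⁴)). -/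
/-- Root-of-unity sum: `∑_{i<m} 1/(1 - εⁱ s) = m/(1 - s^m)`. -/
lemma sum_one_div_one_sub_pow (m : ℕ) (hm : 1 ≤ m) (ε : ℂ)
    (hε : IsPrimitiveRoot ε m) (s : ℂ) (hs : s ^ m ≠ 1) :
    ∑ i ∈ Finset.range m, 1 / (1 - ε ^ i * s) = m / (1 - s ^ m) := by
  have hεm : ε ^ m = 1 := hε.pow_eq_one
  have hsm : (1 : ℂ) - s ^ m ≠ 0 := sub_ne_zero.mpr fun h => hs h.symm
  have hpow : ∀ i : ℕ, (ε ^ i * s) ^ m = s ^ m := by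
    intro i
    rw [mul_pow, ← pow_mul, mul_comm i m, pow_mul, hεm, one_pow, one_mul]
  have hden : ∀ i : ℕ, (1 : ℂ) - ε ^ i * s ≠ 0 := by
    intro i h
    have h1 : ε ^ i * s = 1 := by linear_combination -h
    apply hs
    calc s ^ m = (ε ^ i * s) ^ m := (hpow i).symm
    _ = 1 := by rw [h1, one_pow]
  have key : ∀ i ∈ Finset.range m,
      1 / (1 - ε ^ i * s) = (∑ k ∈ Finset.range m, (ε ^ i * s) ^ k) / (1 - s ^ m) := by
    intro i _
    rw [div_eq_div_iff (hden i) hsm, one_mul]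
    have hg := geom_sum_mul (ε ^ i * s) m
    linear_combination hg + hpow i
  rw [Finset.sum_congr rfl key, ← Finset.sum_div]
  congr 1
  rw [Finset.sum_comm]
  have inner : ∀ k ∈ Finset.range m,
      (∑ i ∈ Finset.range m, (ε ^ i * s) ^ k) = if k = 0 then (m : ℂ) else 0 := by
    intro k hk
    split_ifs with h0
    · subst h0; simp
    · have hkpos : 0 < k := Nat.pos_of_ne_zero h0
      have hklt : k < m := Finset.mem_range.mp hk
      have hne : ε ^ k ≠ 1 := hε.pow_ne_one_of_pos_of_lt hkpos.ne' hklt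
      have hg := geom_sum_mul (ε ^ k) m
      have hεkm : (ε ^ k) ^ m = 1 := by
        rw [← pow_mul, mul_comm k m, pow_mul, hεm, one_pow]
      have hsum0 : (∑ i ∈ Finset.range m, (ε ^ k) ^ i) = 0 := by
        have hz : (∑ i ∈ Finset.range m, (ε ^ k) ^ i) * (ε ^ k - 1) = 0 := by
          rw [hg, hεkm, sub_self]
        rcases mul_eq_zero.mp hz with h | h
        · exact h
        · exact absurd (by linear_combination h) hne
      calc (∑ i ∈ Finset.range m, (ε ^ i * s) ^ k)
          = (∑ i ∈ Finset.range m, (ε ^ k) ^ i) * s ^ k := by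
            rw [Finset.sum_mul]
            refine Finset.sum_congr rfl fun i _ => ?_
            rw [mul_pow, pow_right_comm]
      _ = 0 := by rw [hsum0, zero_mul]
  rw [Finset.sum_congr rfl inner, Finset.sum_ite_eq' (Finset.range m) 0 (fun _ => (m : ℂ)),
    if_pos (Finset.mem_range.mpr hm)]

/-- Partial-fraction style identity for a single term of `S₂`. -/
lemma molien_term_aux (u t : ℂ) (hu0 : u ≠ 0) (h1 : 1 + u * t ≠ 0)
    (h2 : 1 - u⁻¹ * t ≠ 0) (h3 : 1 + t ^ 2 ≠ 0) :
    1 / ((1 + u * t) * (1 - u⁻¹ * t)) =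
      (1 / (1 + u * t) + 1 / (1 - u⁻¹ * t) - 1) / (1 + t ^ 2) := by
  have h4 : u - t ≠ 0 := by
    intro h
    apply h2
    have hut : u * (1 - u⁻¹ * t) = u - t := by field_simp
    rw [← hut] at h
    rcases mul_eq_zero.mp h with h' | h'
    · exact absurd h' hu0
    · rw [h']
  rw [div_eq_div_iff (mul_ne_zero h1 h2) h3, one_mul]
  rw [div_add_div _ _ h1 h2, div_sub_one (mul_ne_zero h1 h2), div_mul_cancel₀ _ (mul_ne_zero h1 h2)]
  field_simp
  ring

/-- The sum `S₂` in the proof of Example 8.3: for `ε` a primitive `2n`-th root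
of unity and `t^{2n} ≠ 1`, `t⁴ ≠ 1`,
`∑_{i=0}^{2n-1} 1/((1 + εⁱt)(1 - ε⁻ⁱt)) = 2n(1 - t^{4n})(1 - t²)/((1 - t^{2n})²(1 - t⁴))`. -/
theorem molien_sum_S2
    (n : ℕ) (hn : 1 ≤ n) (ε : ℂ) (hε : IsPrimitiveRoot ε (2 * n))
    (t : ℂ) (ht : t ^ (2 * n) ≠ 1) (ht4 : t ^ 4 ≠ 1) :
    ∑ i ∈ Finset.range (2 * n),
        1 / ((1 + ε ^ i * t) * (1 - ε ^ (-(i : ℤ)) * t)) =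
      2 * n * (1 - t ^ (4 * n)) * (1 - t ^ 2) / ((1 - t ^ (2 * n)) ^ 2 * (1 - t ^ 4)) := by
  have h2n : 1 ≤ 2 * n := by omega
  have h2n0 : (2 * n : ℕ) ≠ 0 := by omega
  have hεinv : IsPrimitiveRoot ε⁻¹ (2 * n) := hε.inv
  have hε2n : ε ^ (2 * n) = 1 := hε.pow_eq_one
  have hε0 : ε ≠ 0 := hε.ne_zero h2n0
  have hεpow : ∀ i : ℕ, (ε ^ i) ^ (2 * n) = 1 := by
    intro i
    rw [← pow_mul, mul_comm i (2 * n), pow_mul, hε2n, one_pow]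
  have ht2 : (1 : ℂ) + t ^ 2 ≠ 0 := by
    intro h
    apply ht4
    have h1 : t ^ 2 = -1 := by linear_combination h
    calc t ^ 4 = (t ^ 2) ^ 2 := by ring
    _ = 1 := by rw [h1]; ring
  have htn : (1 : ℂ) - t ^ (2 * n) ≠ 0 := sub_ne_zero.mpr fun h => ht h.symm
  have ht4' : (1 : ℂ) - t ^ 4 ≠ 0 := sub_ne_zero.mpr fun h => ht4 h.symm
  have hu : ∀ i : ℕ, (1 : ℂ) + ε ^ i * t ≠ 0 := by
    intro i h
    apply ht
    have h1 : ε ^ i * t = -1 := by linear_combination h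
    calc t ^ (2 * n) = (ε ^ i * t) ^ (2 * n) := by rw [mul_pow, hεpow, one_mul]
    _ = 1 := by rw [h1, pow_mul]; norm_num
  have hv : ∀ i : ℕ, (1 : ℂ) - (ε ^ i)⁻¹ * t ≠ 0 := by
    intro i h
    apply ht
    have h1 : (ε ^ i)⁻¹ * t = 1 := by linear_combination -h
    have hinv : ((ε ^ i)⁻¹) ^ (2 * n) = 1 := by rw [inv_pow, hεpow, inv_one]
    calc t ^ (2 * n) = ((ε ^ i)⁻¹ * t) ^ (2 * n) := by rw [mul_pow, hinv, one_mul]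
    _ = 1 := by rw [h1, one_pow]
  have hzpow : ∀ i : ℕ, ε ^ (-(i : ℤ)) = (ε ^ i)⁻¹ := by
    intro i
    rw [zpow_neg, zpow_natCast]
  have key : ∀ i ∈ Finset.range (2 * n),
      1 / ((1 + ε ^ i * t) * (1 - ε ^ (-(i : ℤ)) * t)) =
      (1 / (1 + ε ^ i * t) + 1 / (1 - (ε ^ i)⁻¹ * t) - 1) / (1 + t ^ 2) := by
    intro i _
    rw [hzpow i]
    exact molien_term_aux (ε ^ i) t (pow_ne_zero i hε0) (hu i) (hv i) ht2
  rw [Finset.sum_congr rfl key, ← Finset.sum_div]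
  have split : (∑ i ∈ Finset.range (2 * n),
      (1 / (1 + ε ^ i * t) + 1 / (1 - (ε ^ i)⁻¹ * t) - 1)) =
      (∑ i ∈ Finset.range (2 * n), 1 / (1 + ε ^ i * t)) +
      (∑ i ∈ Finset.range (2 * n), 1 / (1 - (ε ^ i)⁻¹ * t)) - 2 * n := by
    rw [Finset.sum_sub_distrib, Finset.sum_add_distrib]
    simp [mul_comm]
  rw [split]
  have sum1 : (∑ i ∈ Finset.range (2 * n), 1 / (1 + ε ^ i * t)) =
      (2 * n : ℕ) / (1 - t ^ (2 * n)) := by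
    have hneg : (-t) ^ (2 * n) = t ^ (2 * n) := Even.neg_pow (even_two_mul n) t
    have hS := sum_one_div_one_sub_pow (2 * n) h2n ε hε (-t) (by rw [hneg]; exact ht)
    rw [hneg] at hS
    rw [← hS]
    refine Finset.sum_congr rfl fun i _ => ?_
    ring_nf
  have sum2 : (∑ i ∈ Finset.range (2 * n), 1 / (1 - (ε ^ i)⁻¹ * t)) =
      (2 * n : ℕ) / (1 - t ^ (2 * n)) := by
    have hS := sum_one_div_one_sub_pow (2 * n) h2n ε⁻¹ hεinv t ht
    rw [← hS]
    refine Finset.sum_congr rfl fun i _ => ?_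
    rw [inv_pow]
  rw [sum1, sum2]
  push_cast
  field_simp
  ring
end

section
/- Let n ≥ 1 be an integer and ε ∈ ℂ a primitive 2n-th root of unity. Let σ and τ be the ℂ-algebra automorphisms of the polynomial ring ℂ[t₁,t₂] determined by σ(t₁) = −t₁, σ(t₂) = t₂ and τ(t₁) = ε·t₁, τ(t₂) = ε⁻¹·t₂. Then the set of polynomials fixed by both σ and τ is exactly the ℂ-subalgebra of ℂ[t₁,t₂] generated by t₁^{2n}, t₂^{2n}, and t₁²t₂². -/
open MvPolynomial

private lemma aeval_diag_monomial (s : Fin 2 → ℂ) (d : Fin 2 →₀ ℕ) (c : ℂ) :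
    aeval (fun i => C (s i) * X i : Fin 2 → MvPolynomial (Fin 2) ℂ) (monomial d c)
      = monomial d ((∏ i, s i ^ d i) * c) := by
  rw [aeval_monomial, monomial_eq, Finsupp.prod_pow, Finsupp.prod_pow]
  simp only [mul_pow, Finset.prod_mul_distrib, ← map_pow, ← map_prod]
  rw [algebraMap_eq, C_mul]
  ring

private lemma coeff_aeval_diag (s : Fin 2 → ℂ) (p : MvPolynomial (Fin 2) ℂ) (d : Fin 2 →₀ ℕ) :
    coeff d (aeval (fun i => C (s i) * X i : Fin 2 → MvPolynomial (Fin 2) ℂ) p)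
      = (∏ i, s i ^ d i) * coeff d p := by
  conv_lhs => rw [p.as_sum, map_sum]
  simp only [aeval_diag_monomial, coeff_sum, coeff_monomial]
  rw [Finset.sum_ite_eq' p.support d]
  by_cases h : d ∈ p.support
  · simp [h]
  · simp [h, notMem_support_iff.mp h]

private lemma mem_adjoin_aux (n m k : ℕ) :
    (X 0 : MvPolynomial (Fin 2) ℂ) ^ (2*m + 2*n*k) * (X 1) ^ (2*m) ∈
      (Algebra.adjoin ℂ
        {(X 0 : MvPolynomial (Fin 2) ℂ) ^ (2 * n), (X 1 : MvPolynomial (Fin 2) ℂ) ^ (2 * n),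
          (X 0 : MvPolynomial (Fin 2) ℂ) ^ 2 * (X 1 : MvPolynomial (Fin 2) ℂ) ^ 2} :
        Subalgebra ℂ (MvPolynomial (Fin 2) ℂ)) := by
  have h : (X 0 : MvPolynomial (Fin 2) ℂ) ^ (2*m + 2*n*k) * (X 1) ^ (2*m)
      = ((X 0)^(2*n))^k * ((X 0)^2 * (X 1)^2)^m := by
    rw [mul_pow, ← pow_mul, ← pow_mul, ← pow_mul, pow_add]; ring
  rw [h]
  exact mul_mem (pow_mem (Algebra.subset_adjoin (by simp)) k)
    (pow_mem (Algebra.subset_adjoin (by simp)) m)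

private lemma mem_adjoin_aux' (n m k : ℕ) :
    (X 0 : MvPolynomial (Fin 2) ℂ) ^ (2*m) * (X 1) ^ (2*m + 2*n*k) ∈
      (Algebra.adjoin ℂ
        {(X 0 : MvPolynomial (Fin 2) ℂ) ^ (2 * n), (X 1 : MvPolynomial (Fin 2) ℂ) ^ (2 * n),
          (X 0 : MvPolynomial (Fin 2) ℂ) ^ 2 * (X 1 : MvPolynomial (Fin 2) ℂ) ^ 2} :
        Subalgebra ℂ (MvPolynomial (Fin 2) ℂ)) := by
  have h : (X 0 : MvPolynomial (Fin 2) ℂ) ^ (2*m) * (X 1) ^ (2*m + 2*n*k)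
      = ((X 1)^(2*n))^k * ((X 0)^2 * (X 1)^2)^m := by
    rw [mul_pow, ← pow_mul, ← pow_mul, ← pow_mul, pow_add]; ring
  rw [h]
  exact mul_mem (pow_mem (Algebra.subset_adjoin (by simp)) k)
    (pow_mem (Algebra.subset_adjoin (by simp)) m)

/-- Case (A_{n,2}) of Section 3 / Example 8.3: the ring of invariants of
`ℂ[t₁,t₂]` under the group generated by `σ : t₁ ↦ -t₁, t₂ ↦ t₂` and
`τ : t₁ ↦ ε t₁, t₂ ↦ ε⁻¹ t₂` (`ε` a primitive `2n`-th root of unity) is the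
subalgebra generated by `t₁^{2n}`, `t₂^{2n}`, `t₁²t₂²`. -/
theorem invariants_Q2_polynomial_ring
    (n : ℕ) (hn : 1 ≤ n) (ε : ℂ) (hε : IsPrimitiveRoot ε (2 * n))
    (σ τ : MvPolynomial (Fin 2) ℂ →ₐ[ℂ] MvPolynomial (Fin 2) ℂ)
    (hσ0 : σ (X 0) = -X 0) (hσ1 : σ (X 1) = X 1)
    (hτ0 : τ (X 0) = C ε * X 0) (hτ1 : τ (X 1) = C ε⁻¹ * X 1) :
    {p : MvPolynomial (Fin 2) ℂ | σ p = p ∧ τ p = p} =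
      (Algebra.adjoin ℂ
        {(X 0 : MvPolynomial (Fin 2) ℂ) ^ (2 * n), (X 1 : MvPolynomial (Fin 2) ℂ) ^ (2 * n),
          (X 0 : MvPolynomial (Fin 2) ℂ) ^ 2 * (X 1 : MvPolynomial (Fin 2) ℂ) ^ 2} :
        Subalgebra ℂ (MvPolynomial (Fin 2) ℂ)) := by
  have h2n : (2 * n : ℕ) ≠ 0 := by omega
  have hε0 : ε ≠ 0 := hε.ne_zero h2n
  have heven : Even (2 * n) := ⟨n, by ring⟩
  set s1 : Fin 2 → ℂ := ![(-1 : ℂ), 1] with hs1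
  set s2 : Fin 2 → ℂ := ![ε, ε⁻¹] with hs2
  have hσ : σ = aeval (fun i => C (s1 i) * X i : Fin 2 → MvPolynomial (Fin 2) ℂ) := by
    apply algHom_ext; intro i
    fin_cases i <;> simp [hσ0, hσ1, hs1]
  have hτ : τ = aeval (fun i => C (s2 i) * X i : Fin 2 → MvPolynomial (Fin 2) ℂ) := by
    apply algHom_ext; intro i
    fin_cases i <;> simp [hτ0, hτ1, hs2]
  ext p
  simp only [Set.mem_setOf_eq, SetLike.mem_coe]
  constructor
  · rintro ⟨h1, h2⟩
    rw [hσ] at h1; rw [hτ] at h2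
    rw [p.as_sum]
    apply Subalgebra.sum_mem
    intro d hd
    have hc : coeff d p ≠ 0 := mem_support_iff.mp hd
    have e1 : (∏ i, s1 i ^ d i) = 1 := by
      have := congrArg (coeff d) h1
      rw [coeff_aeval_diag] at this
      nth_rewrite 2 [← one_mul (coeff d p)] at this
      exact mul_right_cancel₀ hc this
    have e2 : (∏ i, s2 i ^ d i) = 1 := by
      have := congrArg (coeff d) h2
      rw [coeff_aeval_diag] at this
      nth_rewrite 2 [← one_mul (coeff d p)] at this
      exact mul_right_cancel₀ hc this
    rw [Fin.prod_univ_two] at e1 e2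
    simp only [hs1, hs2, Matrix.cons_val_zero, Matrix.cons_val_one, Matrix.head_cons,
      one_pow, mul_one] at e1 e2
    -- e1 : (-1)^(d 0) = 1, e2 : ε ^ d 0 * ε⁻¹ ^ d 1 = 1
    have hd0even : Even (d 0) := by
      by_contra hodd
      rw [(Nat.not_even_iff_odd.mp hodd).neg_one_pow] at e1
      norm_num at e1
    have hεeq : ε ^ (d 0) = ε ^ (d 1) := by
      rw [inv_pow] at e2
      exact (mul_inv_eq_one₀ (pow_ne_zero _ hε0)).mp e2
    have hmon : (monomial d) (coeff d p)
        = C (coeff d p) * ((X 0 : MvPolynomial (Fin 2) ℂ) ^ (d 0) * (X 1) ^ (d 1)) := by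
      rw [monomial_eq, Finsupp.prod_pow, Fin.prod_univ_two]
    rw [hmon]
    refine mul_mem (Subalgebra.algebraMap_mem _ (coeff d p)) ?_
    obtain ⟨m0, hm0⟩ := hd0even
    rcases le_total (d 1) (d 0) with hle | hle
    · have : ε ^ (d 0 - d 1) = 1 := by
        have h' : ε ^ (d 0 - d 1) * ε ^ (d 1) = 1 * ε ^ (d 1) := by
          rw [← pow_add, one_mul, Nat.sub_add_cancel hle, hεeq]
        exact mul_right_cancel₀ (pow_ne_zero _ hε0) h'
      obtain ⟨k, hk⟩ := (hε.pow_eq_one_iff_dvd _).mp this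
      generalize ht : 2 * n * k = t at hk
      have h2t : 2 ∣ t := ht ▸ ⟨n * k, by ring⟩
      obtain ⟨j, hj⟩ := h2t
      obtain ⟨m, hm⟩ : ∃ m, d 1 = 2 * m := ⟨d 1 / 2, by omega⟩
      have hd0 : d 0 = 2 * m + t := by omega
      rw [hd0, hm, ← ht]
      exact mem_adjoin_aux n m k
    · have : ε ^ (d 1 - d 0) = 1 := by
        have h' : ε ^ (d 1 - d 0) * ε ^ (d 0) = 1 * ε ^ (d 0) := by
          rw [← pow_add, one_mul, Nat.sub_add_cancel hle, hεeq]
        exact mul_right_cancel₀ (pow_ne_zero _ hε0) h'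
      obtain ⟨k, hk⟩ := (hε.pow_eq_one_iff_dvd _).mp this
      generalize ht : 2 * n * k = t at hk
      have hd1 : d 1 = 2 * m0 + t := by omega
      rw [hd1, show d 0 = 2 * m0 by omega, ← ht]
      exact mem_adjoin_aux' n m0 k
  · intro hp
    have hle : Algebra.adjoin ℂ
        {(X 0 : MvPolynomial (Fin 2) ℂ) ^ (2 * n), (X 1 : MvPolynomial (Fin 2) ℂ) ^ (2 * n),
          (X 0 : MvPolynomial (Fin 2) ℂ) ^ 2 * (X 1 : MvPolynomial (Fin 2) ℂ) ^ 2}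
        ≤ AlgHom.equalizer σ (AlgHom.id ℂ _) ⊓ AlgHom.equalizer τ (AlgHom.id ℂ _) := by
      apply Algebra.adjoin_le
      intro x hx
      simp only [Set.mem_insert_iff, Set.mem_singleton_iff] at hx
      have hinv : ε ^ 2 * (ε⁻¹) ^ 2 = 1 := by field_simp
      rcases hx with rfl | rfl | rfl
      · constructor
        · show σ _ = _
          rw [map_pow, hσ0, heven.neg_pow]; rfl
        · show τ _ = _
          rw [map_pow, hτ0, mul_pow, ← C_pow, hε.pow_eq_one, map_one, one_mul]; rfl
      · constructor
        · show σ _ = _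
          rw [map_pow, hσ1]; rfl
        · show τ _ = _
          rw [map_pow, hτ1, mul_pow, ← C_pow, inv_pow, hε.pow_eq_one, inv_one, map_one,
            one_mul]; rfl
      · constructor
        · show σ _ = _
          rw [map_mul, map_pow, map_pow, hσ0, hσ1, even_two.neg_pow]; rfl
        · show τ _ = _
          rw [map_mul, map_pow, map_pow, hτ0, hτ1, mul_pow, mul_pow, ← C_pow, ← C_pow,
            mul_mul_mul_comm, ← C_mul, hinv, map_one, one_mul]; rfl
    obtain ⟨hq1, hq2⟩ := hle hp
    exact ⟨hq1, hq2⟩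
end

section
/- Let k be an algebraically closed field of characteristic zero and let O ≤ GL₂(k) be the subgroup of invertible diagonal matrices. Let H be a finite subgroup of O such that either H ⊆ SL₂(k), or every element of H has determinant 1 or −1 with some element of determinant −1. Then there exist P ∈ GL₂(k) and a positive integer n such that P·H·P⁻¹ is one of: (1) the cyclic group generated by c_ε with ε a primitive n-th root of unity; (2) the group generated by d₁ and c_ε with ε a primitive 2n-th root of unity; (3) the group generated by d₁ and c_ε with ε a primitive n-th root of unity and n odd; (4) the cyclic group generated by c_{ε,−} with ε a primitive 4n-th root of unity. -/
open Matrix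

section aux
variable {k : Type*} [Field k]

lemma FDS.diag_form (M : Matrix (Fin 2) (Fin 2) k)
    (h01 : M 0 1 = 0) (h10 : M 1 0 = 0) : M = !![M 0 0, 0; 0, M 1 1] := by
  ext i j; fin_cases i <;> fin_cases j <;> simp [h01, h10]

lemma FDS.mul00 (M N : Matrix (Fin 2) (Fin 2) k) (hM : M 0 1 = 0) :
    (M * N) 0 0 = M 0 0 * N 0 0 := by
  rw [Matrix.mul_apply, Fin.sum_univ_two, hM]; ring

lemma FDS.mul11 (M N : Matrix (Fin 2) (Fin 2) k) (hM : M 1 0 = 0) :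
    (M * N) 1 1 = M 1 1 * N 1 1 := by
  rw [Matrix.mul_apply, Fin.sum_univ_two, hM]; ring

def FDS.chi (H : Subgroup (GL (Fin 2) k))
    (hdiag : ∀ g ∈ H, ((g : GL (Fin 2) k) : Matrix (Fin 2) (Fin 2) k) 0 1 = 0 ∧
        ((g : GL (Fin 2) k) : Matrix (Fin 2) (Fin 2) k) 1 0 = 0) : ↥H →* k where
  toFun g := ((g : GL (Fin 2) k) : Matrix (Fin 2) (Fin 2) k) 0 0
  map_one' := by simp
  map_mul' g h := by
    show (((g : GL (Fin 2) k) * h : GL (Fin 2) k) : Matrix (Fin 2) (Fin 2) k) 0 0 = _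
    rw [Units.val_mul]
    exact FDS.mul00 _ _ (hdiag g.1 g.2).1

def FDS.psi (H : Subgroup (GL (Fin 2) k))
    (hdiag : ∀ g ∈ H, ((g : GL (Fin 2) k) : Matrix (Fin 2) (Fin 2) k) 0 1 = 0 ∧
        ((g : GL (Fin 2) k) : Matrix (Fin 2) (Fin 2) k) 1 0 = 0) : ↥H →* k where
  toFun g := ((g : GL (Fin 2) k) : Matrix (Fin 2) (Fin 2) k) 1 1
  map_one' := by simp
  map_mul' g h := by
    show (((g : GL (Fin 2) k) * h : GL (Fin 2) k) : Matrix (Fin 2) (Fin 2) k) 1 1 = _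
    rw [Units.val_mul]
    exact FDS.mul11 _ _ (hdiag g.1 g.2).2

lemma FDS.map_conj_one {G : Type*} [Group G] (H : Subgroup G) :
    Subgroup.map (MulAut.conj (1 : G)).toMonoidHom H = H := by
  have : (MulAut.conj (1 : G)).toMonoidHom = MonoidHom.id G := by
    ext x; simp
  rw [this, Subgroup.map_id]

end aux

set_option maxHeartbeats 1000000 in
/-- Lemma 3.4: a finite subgroup `H` of the diagonal subgroup `O ≤ GL₂(k)`
that is either contained in `SL₂(k)` or has all determinants `±1` with some
determinant `-1` is, up to conjugation, one of the groups `Q₁, Q₂, Q₃, Q₄`. -/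
theorem finite_diagonal_subgroups
    {k : Type*} [Field k] [IsAlgClosed k] [CharZero k]
    (H : Subgroup (GL (Fin 2) k)) [Finite H]
    (hdiag : ∀ g ∈ H, ((g : GL (Fin 2) k) : Matrix (Fin 2) (Fin 2) k) 0 1 = 0 ∧
        ((g : GL (Fin 2) k) : Matrix (Fin 2) (Fin 2) k) 1 0 = 0)
    (hdet : (∀ g ∈ H, ((g : GL (Fin 2) k) : Matrix (Fin 2) (Fin 2) k).det = 1) ∨
      ((∀ g ∈ H, ((g : GL (Fin 2) k) : Matrix (Fin 2) (Fin 2) k).det = 1 ∨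
          ((g : GL (Fin 2) k) : Matrix (Fin 2) (Fin 2) k).det = -1) ∧
        ∃ g ∈ H, ((g : GL (Fin 2) k) : Matrix (Fin 2) (Fin 2) k).det = -1)) :
    ∃ P : GL (Fin 2) k, ∃ n : ℕ, 0 < n ∧
      ((∃ ε : k, IsPrimitiveRoot ε n ∧
          ∃ cε : GL (Fin 2) k, (cε : Matrix (Fin 2) (Fin 2) k) = !![ε, 0; 0, ε⁻¹] ∧
            Subgroup.map (MulAut.conj P).toMonoidHom H = Subgroup.closure {cε}) ∨
       (∃ ε : k, IsPrimitiveRoot ε (2 * n) ∧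
          ∃ d₁ cε : GL (Fin 2) k, (d₁ : Matrix (Fin 2) (Fin 2) k) = !![-1, 0; 0, 1] ∧
            (cε : Matrix (Fin 2) (Fin 2) k) = !![ε, 0; 0, ε⁻¹] ∧
            Subgroup.map (MulAut.conj P).toMonoidHom H = Subgroup.closure {d₁, cε}) ∨
       (Odd n ∧ ∃ ε : k, IsPrimitiveRoot ε n ∧
          ∃ d₁ cε : GL (Fin 2) k, (d₁ : Matrix (Fin 2) (Fin 2) k) = !![-1, 0; 0, 1] ∧
            (cε : Matrix (Fin 2) (Fin 2) k) = !![ε, 0; 0, ε⁻¹] ∧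
            Subgroup.map (MulAut.conj P).toMonoidHom H = Subgroup.closure {d₁, cε}) ∨
       (∃ ε : k, IsPrimitiveRoot ε (4 * n) ∧
          ∃ cm : GL (Fin 2) k, (cm : Matrix (Fin 2) (Fin 2) k) = !![-ε, 0; 0, ε⁻¹] ∧
            Subgroup.map (MulAut.conj P).toMonoidHom H = Subgroup.closure {cm})) := by
  classical
  set χ := FDS.chi H hdiag with hχdef
  set ψ := FDS.psi H hdiag with hψdef
  have hχ : ∀ g : ↥H, χ g = ((g : GL (Fin 2) k) : Matrix (Fin 2) (Fin 2) k) 0 0 := fun g => rfl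
  have hψ : ∀ g : ↥H, ψ g = ((g : GL (Fin 2) k) : Matrix (Fin 2) (Fin 2) k) 1 1 := fun g => rfl
  -- determinant of an element of H
  have hdetab : ∀ g : ↥H, ((g : GL (Fin 2) k) : Matrix (Fin 2) (Fin 2) k).det = χ g * ψ g := by
    intro g
    rw [Matrix.det_fin_two, (hdiag g.1 g.2).1, hχ, hψ]; ring
  -- matrix of an element of H
  have hmat : ∀ g : ↥H, ((g : GL (Fin 2) k) : Matrix (Fin 2) (Fin 2) k) = !![χ g, 0; 0, ψ g] :=
    fun g => FDS.diag_form _ (hdiag g.1 g.2).1 (hdiag g.1 g.2).2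
  -- extensionality
  have hext : ∀ g g' : ↥H, χ g = χ g' → ψ g = ψ g' → g = g' := by
    intro g g' h1 h2
    apply Subtype.ext; apply Units.ext
    rw [hmat g, hmat g', h1, h2]
  rcases hdet with hSL | ⟨hpm, gneg, hgnegH, hgnegdet⟩
  · -- SL case, Q₁
    have hb : ∀ g : ↥H, ψ g = (χ g)⁻¹ := by
      intro g
      have := hSL g.1 g.2
      rw [hdetab g] at this
      exact eq_inv_of_mul_eq_one_right this
    have hinj : Function.Injective χ := by
      intro g g' h
      exact hext g g' h (by rw [hb, hb, h])
    have hcyc : IsCyclic ↥H := isCyclic_of_subgroup_isDomain χ hinj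
    obtain ⟨g, hg⟩ := IsCyclic.exists_monoid_generator (α := ↥H)
    have hnpos : 0 < orderOf g := orderOf_pos g
    have hord : orderOf (χ g) = orderOf g := orderOf_injective χ hinj g
    refine ⟨1, orderOf g, hnpos, Or.inl ⟨χ g, hord ▸ IsPrimitiveRoot.orderOf (χ g),
      g.1, ?_, ?_⟩⟩
    · rw [hmat g, hb g]
    · rw [FDS.map_conj_one]
      apply le_antisymm
      · intro x hx
        obtain ⟨i, hi⟩ := (Submonoid.mem_powers_iff _ _).1 (hg ⟨x, hx⟩)
        have hxe : x = (g : GL (Fin 2) k) ^ i := by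
          have h2 := congrArg (Subtype.val) hi
          simp only [SubmonoidClass.coe_pow] at h2
          exact h2.symm
        rw [hxe]
        exact pow_mem (Subgroup.subset_closure (Set.mem_singleton _)) i
      · rw [Subgroup.closure_le]
        intro x hx
        simp only [Set.mem_singleton_iff] at hx
        subst hx
        exact g.2
  · -- mixed case
    have h1m1 : (-1 : k) ≠ 1 := by norm_num
    -- the subgroup of determinant-one elements
    set K : Subgroup ↥H :=
      MonoidHom.ker ((Matrix.GeneralLinearGroup.det).comp H.subtype) with hKdef
    have hmemK : ∀ g : ↥H, g ∈ K ↔ ((g : GL (Fin 2) k) : Matrix (Fin 2) (Fin 2) k).det = 1 := by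
      intro g
      rw [hKdef, MonoidHom.mem_ker, MonoidHom.comp_apply, Units.ext_iff]
      simp [Matrix.GeneralLinearGroup.val_det_apply]
    -- ψ is the inverse of χ on K
    have hψK : ∀ x : ↥K, ψ x.1 = (χ x.1)⁻¹ := by
      intro x
      have hx := (hmemK x.1).1 x.2
      rw [hdetab] at hx
      exact eq_inv_of_mul_eq_one_right hx
    have hKcyc : IsCyclic ↥K := by
      apply isCyclic_of_subgroup_isDomain (χ.comp K.subtype)
      intro x y h
      have h' : χ (x : ↥H) = χ (y : ↥H) := h
      apply Subtype.ext
      exact hext _ _ h' (by rw [hψK x, hψK y, h'])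
    obtain ⟨c, hc⟩ := IsCyclic.exists_monoid_generator (α := ↥K)
    set n := orderOf c with hn
    have hnpos : 0 < n := orderOf_pos c
    set ε := χ (c : ↥H) with hε
    have hεord : orderOf ε = n := by
      rw [hn, hε]
      exact orderOf_injective (χ.comp K.subtype)
        (fun x y h => by
          have h' : χ (x : ↥H) = χ (y : ↥H) := h
          exact Subtype.ext (hext _ _ h' (by rw [hψK x, hψK y, h']))) c
    have hεprim : IsPrimitiveRoot ε n := hεord ▸ IsPrimitiveRoot.orderOf ε
    have hεpow : ε ^ n = 1 := by rw [← hεord]; exact pow_orderOf_eq_one ε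
    have hεne : ε ≠ 0 := by
      intro h
      rw [h, zero_pow hnpos.ne'] at hεpow
      exact zero_ne_one hεpow
    have hcmat : (((c : ↥H) : GL (Fin 2) k) : Matrix (Fin 2) (Fin 2) k) = !![ε, 0; 0, ε⁻¹] := by
      rw [hmat, hψK c, hε]
    -- every determinant-one element is a power of c
    have hpowK : ∀ g : ↥H, ((g : GL (Fin 2) k) : Matrix (Fin 2) (Fin 2) k).det = 1 →
        ∃ i : ℕ, (c : ↥H) ^ i = g := by
      intro g hg
      obtain ⟨i, hi⟩ := (Submonoid.mem_powers_iff _ _).1 (hc ⟨g, (hmemK g).2 hg⟩)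
      refine ⟨i, ?_⟩
      have h2 := congrArg (Subtype.val) hi
      simpa using h2
    -- decomposition of H given an involution d of determinant -1
    have hdecomp : ∀ d : ↥H, ((d : GL (Fin 2) k) : Matrix (Fin 2) (Fin 2) k).det = -1 →
        (d : GL (Fin 2) k) * d = 1 →
        ∀ x ∈ H, (∃ i : ℕ, x = ((c : ↥H) : GL (Fin 2) k) ^ i) ∨
          (∃ i : ℕ, x = (d : GL (Fin 2) k) * ((c : ↥H) : GL (Fin 2) k) ^ i) := by
      intro d hddet hdd x hx
      rcases hpm x hx with h1 | h1
      · obtain ⟨i, hi⟩ := hpowK ⟨x, hx⟩ h1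
        left; refine ⟨i, ?_⟩
        have h2 := congrArg (Subtype.val) hi
        simp only [SubmonoidClass.coe_pow] at h2
        exact h2.symm
      · have hyd : (((⟨(d : GL (Fin 2) k) * x, mul_mem d.2 hx⟩ : ↥H) : GL (Fin 2) k) :
            Matrix (Fin 2) (Fin 2) k).det = 1 := by
          show ((((d : GL (Fin 2) k) * x : GL (Fin 2) k)) : Matrix (Fin 2) (Fin 2) k).det = 1
          rw [Units.val_mul, Matrix.det_mul, hddet, h1]
          ring
        obtain ⟨i, hi⟩ := hpowK ⟨(d : GL (Fin 2) k) * x, mul_mem d.2 hx⟩ hyd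
        right; refine ⟨i, ?_⟩
        have h2 := congrArg (Subtype.val) hi
        simp only [SubmonoidClass.coe_pow] at h2
        have h3 : ((c : ↥H) : GL (Fin 2) k) ^ i = (d : GL (Fin 2) k) * x := h2
        rw [h3, ← mul_assoc, hdd, one_mul]
    -- the closure equality given such a d
    have hclose : ∀ d : ↥H, ((d : GL (Fin 2) k) : Matrix (Fin 2) (Fin 2) k).det = -1 →
        (d : GL (Fin 2) k) * d = 1 →
        H = Subgroup.closure {(d : GL (Fin 2) k), ((c : ↥H) : GL (Fin 2) k)} := by
      intro d hddet hdd
      apply le_antisymm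
      · intro x hx
        have hdm : (d : GL (Fin 2) k) ∈
            Subgroup.closure {(d : GL (Fin 2) k), ((c : ↥H) : GL (Fin 2) k)} :=
          Subgroup.subset_closure (Set.mem_insert _ _)
        have hcm : ((c : ↥H) : GL (Fin 2) k) ∈
            Subgroup.closure {(d : GL (Fin 2) k), ((c : ↥H) : GL (Fin 2) k)} :=
          Subgroup.subset_closure (Set.mem_insert_iff.2 (Or.inr rfl))
        rcases hdecomp d hddet hdd x hx with ⟨i, rfl⟩ | ⟨i, rfl⟩
        · exact pow_mem hcm i
        · exact mul_mem hdm (pow_mem hcm i)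
      · rw [Subgroup.closure_le]
        intro x hx
        simp only [Set.mem_insert_iff, Set.mem_singleton_iff] at hx
        rcases hx with rfl | rfl
        · exact d.2
        · exact (c : ↥H).2
    by_cases hA' : ∃ e : ↥H, χ e = -1 ∧ ψ e = 1
    · -- diag(-1,1) ∈ H : groups Q₂ / Q₃ with P = 1
      obtain ⟨d, hd1, hd2⟩ := hA'
      have hdmat : ((d : GL (Fin 2) k) : Matrix (Fin 2) (Fin 2) k) = !![-1, 0; 0, 1] := by
        rw [hmat, hd1, hd2]
      have hddet : ((d : GL (Fin 2) k) : Matrix (Fin 2) (Fin 2) k).det = -1 := by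
        rw [hdetab, hd1, hd2]; ring
      have hdd : (d : GL (Fin 2) k) * d = 1 := by
        apply Units.ext
        rw [Units.val_mul, hdmat, Units.val_one]
        norm_num [Matrix.mul_fin_two, ← Matrix.one_fin_two]
      have hgrp : Subgroup.map (MulAut.conj (1 : GL (Fin 2) k)).toMonoidHom H =
          Subgroup.closure {(d : GL (Fin 2) k), ((c : ↥H) : GL (Fin 2) k)} := by
        rw [FDS.map_conj_one]; exact hclose d hddet hdd
      rcases Nat.even_or_odd n with he | ho
      · obtain ⟨m, hm⟩ := he
        refine ⟨1, m, by omega, Or.inr (Or.inl ⟨ε, ?_, (d : GL (Fin 2) k),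
          ((c : ↥H) : GL (Fin 2) k), hdmat, hcmat, hgrp⟩)⟩
        have h2m : 2 * m = n := by omega
        rw [h2m]; exact hεprim
      · exact ⟨1, n, hnpos, Or.inr (Or.inr (Or.inl ⟨ho, ε, hεprim, (d : GL (Fin 2) k),
          ((c : ↥H) : GL (Fin 2) k), hdmat, hcmat, hgrp⟩))⟩
    by_cases hA : ∃ e : ↥H, χ e = 1 ∧ ψ e = -1
    · -- diag(1,-1) ∈ H : groups Q₂ / Q₃ after conjugating by the swap matrix
      obtain ⟨d, hd1, hd2⟩ := hA
      have hdmat : ((d : GL (Fin 2) k) : Matrix (Fin 2) (Fin 2) k) = !![1, 0; 0, -1] := by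
        rw [hmat, hd1, hd2]
      have hddet : ((d : GL (Fin 2) k) : Matrix (Fin 2) (Fin 2) k).det = -1 := by
        rw [hdetab, hd1, hd2]; ring
      have hdd : (d : GL (Fin 2) k) * d = 1 := by
        apply Units.ext
        rw [Units.val_mul, hdmat, Units.val_one]
        norm_num [Matrix.mul_fin_two, ← Matrix.one_fin_two]
      have hSS : (!![(0:k),1;1,0] : Matrix (Fin 2) (Fin 2) k) * !![(0:k),1;1,0] = 1 := by
        norm_num [Matrix.mul_fin_two, ← Matrix.one_fin_two]
      set P : GL (Fin 2) k := ⟨!![(0:k),1;1,0], !![(0:k),1;1,0], hSS, hSS⟩ with hPdef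
      have hconj : ∀ g : GL (Fin 2) k, (((MulAut.conj P).toMonoidHom g : GL (Fin 2) k) :
          Matrix (Fin 2) (Fin 2) k) =
          !![(0:k),1;1,0] * (g : Matrix (Fin 2) (Fin 2) k) * !![(0:k),1;1,0] := by
        intro g
        show ((P * g * P⁻¹ : GL (Fin 2) k) : Matrix (Fin 2) (Fin 2) k) = _
        rw [Units.val_mul, Units.val_mul]
        rfl
      have hswap : ∀ u v : k, (!![(0:k),1;1,0]) * !![u, 0; 0, v] * !![(0:k),1;1,0] =
          !![v, 0; 0, u] := by
        intro u v; norm_num [Matrix.mul_fin_two]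
      have hDmat : (((MulAut.conj P).toMonoidHom (d : GL (Fin 2) k) : GL (Fin 2) k) :
          Matrix (Fin 2) (Fin 2) k) = !![-1, 0; 0, 1] := by
        rw [hconj, hdmat, hswap]
      have hCmat : (((MulAut.conj P).toMonoidHom ((c : ↥H) : GL (Fin 2) k) : GL (Fin 2) k) :
          Matrix (Fin 2) (Fin 2) k) = !![ε⁻¹, 0; 0, (ε⁻¹)⁻¹] := by
        rw [inv_inv, hconj, hcmat, hswap]
      have hinvprim : IsPrimitiveRoot ε⁻¹ n := by
        constructor
        · rw [inv_pow, hεpow, inv_one]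
        · intro l hl
          apply hεprim.dvd_of_pow_eq_one
          have h2 := mul_pow ε ε⁻¹ l
          rw [mul_inv_cancel₀ hεne, one_pow, hl, mul_one] at h2
          exact h2.symm
      have hgrp : Subgroup.map (MulAut.conj P).toMonoidHom H =
          Subgroup.closure {((MulAut.conj P).toMonoidHom (d : GL (Fin 2) k)),
            ((MulAut.conj P).toMonoidHom ((c : ↥H) : GL (Fin 2) k))} := by
        apply le_antisymm
        · rintro x hx
          obtain ⟨g, hgH, rfl⟩ := Subgroup.mem_map.1 hx
          have hdm : ((MulAut.conj P).toMonoidHom (d : GL (Fin 2) k)) ∈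
              Subgroup.closure {((MulAut.conj P).toMonoidHom (d : GL (Fin 2) k)),
                ((MulAut.conj P).toMonoidHom ((c : ↥H) : GL (Fin 2) k))} :=
            Subgroup.subset_closure (Set.mem_insert _ _)
          have hcm : ((MulAut.conj P).toMonoidHom ((c : ↥H) : GL (Fin 2) k)) ∈
              Subgroup.closure {((MulAut.conj P).toMonoidHom (d : GL (Fin 2) k)),
                ((MulAut.conj P).toMonoidHom ((c : ↥H) : GL (Fin 2) k))} :=
            Subgroup.subset_closure (Set.mem_insert_iff.2 (Or.inr rfl))
          rcases hdecomp d hddet hdd g hgH with ⟨i, rfl⟩ | ⟨i, rfl⟩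
          · rw [_root_.map_pow]; exact pow_mem hcm i
          · rw [_root_.map_mul, _root_.map_pow]; exact mul_mem hdm (pow_mem hcm i)
        · rw [Subgroup.closure_le]
          intro x hx
          simp only [Set.mem_insert_iff, Set.mem_singleton_iff] at hx
          rcases hx with rfl | rfl
          · exact Subgroup.mem_map.2 ⟨(d : GL (Fin 2) k), d.2, rfl⟩
          · exact Subgroup.mem_map.2 ⟨((c : ↥H) : GL (Fin 2) k), (c : ↥H).2, rfl⟩
      rcases Nat.even_or_odd n with he | ho
      · obtain ⟨m, hm⟩ := he
        refine ⟨P, m, by omega, Or.inr (Or.inl ⟨ε⁻¹, ?_,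
          (MulAut.conj P).toMonoidHom (d : GL (Fin 2) k),
          (MulAut.conj P).toMonoidHom ((c : ↥H) : GL (Fin 2) k), hDmat, hCmat, hgrp⟩)⟩
        have h2m : 2 * m = n := by omega
        rw [h2m]; exact hinvprim
      · exact ⟨P, n, hnpos, Or.inr (Or.inr (Or.inl ⟨ho, ε⁻¹, hinvprim,
          (MulAut.conj P).toMonoidHom (d : GL (Fin 2) k),
          (MulAut.conj P).toMonoidHom ((c : ↥H) : GL (Fin 2) k), hDmat, hCmat, hgrp⟩))⟩
    · -- neither: H is cyclic, group Q₄
      have hinj : Function.Injective χ := by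
        intro g g' hgg
        have hx1 : χ (g * g'⁻¹) = 1 := by
          rw [_root_.map_mul, hgg, ← _root_.map_mul, mul_inv_cancel, _root_.map_one]
        have hd := hdetab (g * g'⁻¹)
        rcases hpm ((g * g'⁻¹ : ↥H) : GL (Fin 2) k) (g * g'⁻¹ : ↥H).2 with h1 | h1
        · rw [hd, hx1, one_mul] at h1
          have hone : g * g'⁻¹ = 1 := hext _ 1 (by rw [hx1, _root_.map_one]) (by rw [h1, _root_.map_one])
          exact mul_inv_eq_one.1 hone
        · rw [hd, hx1, one_mul] at h1
          exact absurd ⟨g * g'⁻¹, hx1, h1⟩ hA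
      have hHcyc : IsCyclic ↥H := isCyclic_of_subgroup_isDomain χ hinj
      obtain ⟨h₀, hgen⟩ := IsCyclic.exists_monoid_generator (α := ↥H)
      set N := orderOf h₀ with hN
      have hNpos : 0 < N := orderOf_pos h₀
      set ε₀ := χ h₀ with hε₀
      have hord : orderOf ε₀ = N := orderOf_injective χ hinj h₀
      have hpow1 : ε₀ ^ N = 1 := by rw [← hord]; exact pow_orderOf_eq_one ε₀
      have hε₀ne : ε₀ ≠ 0 := fun h => by
        rw [h, zero_pow hNpos.ne'] at hpow1; exact zero_ne_one hpow1
      have hdet₀ : ε₀ * ψ h₀ = -1 := by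
        rcases hpm (h₀ : GL (Fin 2) k) h₀.2 with h1 | h1
        · exfalso
          obtain ⟨i, hi⟩ := (Submonoid.mem_powers_iff _ _).1 (hgen ⟨gneg, hgnegH⟩)
          have hgneg2 : χ (h₀ ^ i) * ψ (h₀ ^ i) = -1 := by
            rw [hi]
            have hdg := hdetab ⟨gneg, hgnegH⟩
            rw [show ((⟨gneg, hgnegH⟩ : ↥H) : GL (Fin 2) k) = gneg from rfl] at hdg
            rw [← hdg]
            exact hgnegdet
          have hχψ : χ h₀ * ψ h₀ = 1 := (hdetab h₀).symm.trans h1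
          rw [_root_.map_pow, _root_.map_pow, ← mul_pow, hχψ, one_pow] at hgneg2
          exact h1m1 hgneg2.symm
        · exact (hdetab h₀).symm.trans h1
      have hψ₀ : ψ h₀ = -ε₀⁻¹ :=
        mul_left_cancel₀ hε₀ne (by rw [hdet₀, mul_neg, mul_inv_cancel₀ hε₀ne])
      have hψN : ψ h₀ ^ N = 1 := by
        rw [← _root_.map_pow, hN, pow_orderOf_eq_one, _root_.map_one]
      have hevenN : Even N := by
        rw [hψ₀, neg_pow, inv_pow, hpow1, inv_one, mul_one] at hψN
        exact (neg_one_pow_eq_one_iff_even h1m1).1 hψN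
      have h4 : 4 ∣ N := by
        by_contra h4
        obtain ⟨M, hM⟩ := hevenN
        have hModd : Odd M := by
          rcases Nat.even_or_odd M with ⟨t, ht⟩ | hMo
          · exact absurd ⟨t, by omega⟩ h4
          · exact hMo
        have hMpos : 0 < M := by omega
        have hMlt : M < N := by omega
        have hsq : ε₀ ^ M * ε₀ ^ M = 1 := by
          rw [← pow_add, ← hM]; exact hpow1
        have hεM : ε₀ ^ M = -1 := by
          rcases mul_self_eq_one_iff.1 hsq with h | h
          · exact absurd h (pow_ne_one_of_lt_orderOf hMpos.ne' (by rw [hord]; exact hMlt))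
          · exact h
        refine hA' ⟨h₀ ^ M, ?_, ?_⟩
        · rw [_root_.map_pow]
          exact hεM
        · rw [_root_.map_pow, hψ₀, neg_pow, inv_pow, hεM, hModd.neg_one_pow]
          norm_num
      obtain ⟨m, hm⟩ := h4
      have hmpos : 0 < m := by omega
      have hprimε : IsPrimitiveRoot (-ε₀) (4 * m) := by
        constructor
        · rw [← hm, neg_pow, hpow1, mul_one, hevenN.neg_one_pow]
        · intro l hl
          rw [neg_pow] at hl
          rcases Nat.even_or_odd l with hle | hlo
          · rw [hle.neg_one_pow, one_mul] at hl
            have hdvd := orderOf_dvd_of_pow_eq_one hl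
            rw [hord, hm] at hdvd
            exact hdvd
          · exfalso
            rw [hlo.neg_one_pow, neg_one_mul] at hl
            have hεl : ε₀ ^ l = -1 := neg_eq_iff_eq_neg.1 hl
            have hl2 : ε₀ ^ (2 * l) = 1 := by
              rw [two_mul, pow_add, hεl]; norm_num
            have hdvd := orderOf_dvd_of_pow_eq_one hl2
            rw [hord, hm] at hdvd
            obtain ⟨t, ht⟩ := hdvd
            have hl' : l = 2 * (m * t) := by
              have h2 : 2 * l = 2 * (2 * (m * t)) := by rw [ht]; ring
              exact Nat.eq_of_mul_eq_mul_left (by norm_num) h2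
            have hle : Even l := ⟨m * t, by rw [hl']; ring⟩
            exact (Nat.not_odd_iff_even.2 hle) hlo
      refine ⟨1, m, hmpos, Or.inr (Or.inr (Or.inr ⟨-ε₀, hprimε,
        (h₀ : GL (Fin 2) k), ?_, ?_⟩))⟩
      · rw [hmat h₀, hψ₀, neg_neg, inv_neg]
      · rw [FDS.map_conj_one]
        apply le_antisymm
        · intro x hx
          obtain ⟨i, hi⟩ := (Submonoid.mem_powers_iff _ _).1 (hgen ⟨x, hx⟩)
          have hxe : x = (h₀ : GL (Fin 2) k) ^ i := by
            have h2 := congrArg (Subtype.val) hi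
            simp only [SubmonoidClass.coe_pow] at h2
            exact h2.symm
          rw [hxe]
          exact pow_mem (Subgroup.subset_closure (Set.mem_singleton _)) i
        · rw [Subgroup.closure_le]
          intro x hx
          simp only [Set.mem_singleton_iff] at hx
          subst hx
          exact h₀.2
end
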